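/- arXiv:1101.2973 — 11 statements merged into one kernel-verified Lean document; each statement's English description precedes it below -/
import Mathlib

section
/- Let f be a nonnegative submodular function on a finite ground set X. For any sets C, S₁ ⊆ X, let C' = C \ S₁, and let S₂ be any subset of X \ S₁. Then f(S₁ ∪ C) + f(S₁ ∩ C) + f(S₂ ∪ C') ≥ f(C). -/
/-- Lemma of Gupta et al..
Let `f` be a nonnegative submodular function on a finite ground set `X`.
For any `C, S₁ ⊆ X`, with `C' = C \ S₁`, and any `S₂ ⊆ X \ S₁`,
`f(S₁ ∪ C) + f(S₁ ∩ C) + f(S₂ ∪ C') ≥ f(C)`. -/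
theorem stmt_0 {α : Type*} [DecidableEq α] (X : Finset α) (f : Finset α → ℝ)
    (hsub : ∀ A ⊆ X, ∀ B ⊆ X, f A + f B ≥ f (A ∪ B) + f (A ∩ B))
    (hnonneg : ∀ A ⊆ X, 0 ≤ f A)
    (C S₁ S₂ : Finset α) (hC : C ⊆ X) (hS₁ : S₁ ⊆ X) (hS₂ : S₂ ⊆ X \ S₁) :
    f (S₁ ∪ C) + f (S₁ ∩ C) + f (S₂ ∪ (C \ S₁)) ≥ f C := by
  have hS₂X : S₂ ⊆ X := hS₂.trans (Finset.sdiff_subset)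
  have hdisj : ∀ a ∈ S₂, a ∉ S₁ := fun a ha => (Finset.mem_sdiff.mp (hS₂ ha)).2
  have e1 : (S₁ ∩ C) ∪ (S₂ ∪ (C \ S₁)) = C ∪ S₂ := by
    ext a; simp only [Finset.mem_union, Finset.mem_inter, Finset.mem_sdiff]
    constructor
    · rintro ((⟨_, h⟩) | (h | ⟨h, _⟩)) <;> tauto
    · rintro (h | h)
      · by_cases hs : a ∈ S₁ <;> tauto
      · tauto
  have e2 : (S₁ ∩ C) ∩ (S₂ ∪ (C \ S₁)) = ∅ := by
    ext a; simp only [Finset.mem_inter, Finset.mem_union, Finset.mem_sdiff,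
      Finset.notMem_empty, iff_false]
    rintro ⟨⟨h1, _⟩, (h | ⟨_, h⟩)⟩
    · exact hdisj a h h1
    · exact h h1
  have e3 : (S₁ ∪ C) ∩ (C ∪ S₂) = C := by
    ext a; simp only [Finset.mem_inter, Finset.mem_union]
    constructor
    · rintro ⟨(h1 | h1), (h2 | h2)⟩ <;> first | assumption | exact absurd h2 (hdisj a h2 h1).elim
    · tauto
  have h1 := hsub (S₁ ∩ C) ((Finset.inter_subset_left).trans hS₁)
    (S₂ ∪ (C \ S₁)) (Finset.union_subset hS₂X ((Finset.sdiff_subset).trans hC))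
  rw [e1, e2] at h1
  have h2 := hsub (S₁ ∪ C) (Finset.union_subset hS₁ hC)
    (C ∪ S₂) (Finset.union_subset hC hS₂X)
  rw [e3] at h2
  have n1 : 0 ≤ f ∅ := hnonneg ∅ (Finset.empty_subset X)
  have n2 : 0 ≤ f ((S₁ ∪ C) ∪ (C ∪ S₂)) := hnonneg _ (by
    apply Finset.union_subset <;> apply Finset.union_subset <;> assumption)
  linarith
end

section
/- Let f be a nonnegative submodular function on a finite ground set X and let k be a natural number. Suppose S₁ ⊆ X with |S₁| = k satisfies 2·f(S₁) ≥ f(S₁ ∪ C) + f(S₁ ∩ C) for every C ⊆ X with |C| = k, and suppose S₂ ⊆ X \ S₁ satisfies 2·f(S₂) ≥ f(S₂ ∪ C') for every C' ⊆ X \ S₁ with |C'| ≤ k. Then for every C ⊆ X with |C| = k, max(f(S₁), f(S₂)) ≥ f(C)/4. -/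
/-- Combining the local-search solution `S₁` and the greedy solution `S₂` gives a
`1/4`-approximation for the exact cardinality constraint. -/
theorem stmt_1 {α : Type*} [DecidableEq α] (X : Finset α) (f : Finset α → ℝ)
    (hsub : ∀ A ⊆ X, ∀ B ⊆ X, f A + f B ≥ f (A ∪ B) + f (A ∩ B))
    (hnonneg : ∀ A ⊆ X, 0 ≤ f A)
    (k : ℕ) (S₁ S₂ : Finset α)
    (hS₁X : S₁ ⊆ X) (hS₁card : S₁.card = k)
    (hS₁ : ∀ C ⊆ X, C.card = k → 2 * f S₁ ≥ f (S₁ ∪ C) + f (S₁ ∩ C))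
    (hS₂X : S₂ ⊆ X \ S₁)
    (hS₂ : ∀ C' ⊆ X \ S₁, C'.card ≤ k → 2 * f S₂ ≥ f (S₂ ∪ C'))
    (C : Finset α) (hC : C ⊆ X) (hCcard : C.card = k) :
    max (f S₁) (f S₂) ≥ f C / 4 := by
  set D := C \ S₁ with hD
  have hS₂X' : S₂ ⊆ X := hS₂X.trans (Finset.sdiff_subset)
  have hDX : D ⊆ X := (Finset.sdiff_subset).trans hC
  have hDX' : D ⊆ X \ S₁ := Finset.sdiff_subset_sdiff hC (le_refl _)
  have hDcard : D.card ≤ k := hCcard ▸ Finset.card_le_card Finset.sdiff_subset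
  have h1 : 2 * f S₁ ≥ f (S₁ ∪ C) + f (S₁ ∩ C) := hS₁ C hC hCcard
  have h2 : 2 * f S₂ ≥ f (S₂ ∪ D) := hS₂ D hDX' hDcard
  -- intersection identity
  have hint : (S₂ ∪ D) ∩ (S₁ ∪ C) = D := by
    ext x
    simp only [hD, Finset.mem_inter, Finset.mem_union, Finset.mem_sdiff]
    constructor
    · rintro ⟨h₂ | ⟨hc, hns⟩, h₁⟩
      · have := hS₂X h₂
        rw [Finset.mem_sdiff] at this
        rcases h₁ with h₁ | h₁
        · exact absurd h₁ this.2
        · exact ⟨h₁, this.2⟩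
      · exact ⟨hc, hns⟩
    · rintro ⟨hc, hns⟩
      exact ⟨Or.inr ⟨hc, hns⟩, Or.inr hc⟩
  have h3 : f (S₂ ∪ D) + f (S₁ ∪ C) ≥ f ((S₂ ∪ D) ∪ (S₁ ∪ C)) + f D := by
    have := hsub (S₂ ∪ D) (Finset.union_subset hS₂X' hDX) (S₁ ∪ C)
      (Finset.union_subset hS₁X hC)
    rw [hint] at this
    exact this
  have hcup : (S₁ ∩ C) ∪ D = C := by
    ext x
    simp only [hD, Finset.mem_union, Finset.mem_inter, Finset.mem_sdiff]
    constructor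
    · rintro (⟨_, hc⟩ | ⟨hc, _⟩) <;> exact hc
    · intro hc
      by_cases hs : x ∈ S₁
      · exact Or.inl ⟨hs, hc⟩
      · exact Or.inr ⟨hc, hs⟩
  have h4 : f (S₁ ∩ C) + f D ≥ f C + f ((S₁ ∩ C) ∩ D) := by
    have := hsub (S₁ ∩ C) ((Finset.inter_subset_left).trans hS₁X) D hDX
    rw [hcup] at this
    exact this
  have h5 : 0 ≤ f ((S₁ ∩ C) ∩ D) :=
    hnonneg _ ((Finset.inter_subset_right).trans hDX)
  have h6 : 0 ≤ f ((S₂ ∪ D) ∪ (S₁ ∪ C)) :=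
    hnonneg _ (Finset.union_subset (Finset.union_subset hS₂X' hDX)
      (Finset.union_subset hS₁X hC))
  have hm1 : f S₁ ≤ max (f S₁) (f S₂) := le_max_left _ _
  have hm2 : f S₂ ≤ max (f S₁) (f S₂) := le_max_right _ _
  linarith
end

section
/- Let f be a submodular function on the ground set {1,…,n} with multilinear extension F, let y ∈ [0,1]^n, and let v ∈ ℝ^n with v ≥ 0 componentwise. Then the function ξ ↦ F(y + ξ·v) is concave on the interval I = {ξ ≥ 0 : y + ξ·v ∈ [0,1]^n}. -/
open Finset

/-- The multilinear extension of a set function `f` on the ground set `Fin n`,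
regarded (by the same polynomial formula) as a function on all of `ℝⁿ`. -/
noncomputable def multilinearExt {n : ℕ} (f : Finset (Fin n) → ℝ)
    (x : Fin n → ℝ) : ℝ :=
  ∑ S : Finset (Fin n), f S * ((∏ i ∈ S, x i) * ∏ i ∈ Sᶜ, (1 - x i))

/-- The factor attached to coordinate `i` in the term of `S`. -/
noncomputable def mlq {n : ℕ} (y v : Fin n → ℝ) (S : Finset (Fin n)) (i : Fin n) (ξ : ℝ) : ℝ :=
  if i ∈ S then y i + ξ * v i else 1 - (y i + ξ * v i)

/-- The derivative of `mlq y v S i` with respect to `ξ`. -/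
noncomputable def mld {n : ℕ} (v : Fin n → ℝ) (S : Finset (Fin n)) (i : Fin n) : ℝ :=
  if i ∈ S then v i else -v i

lemma mlq_hasDerivAt {n : ℕ} (y v : Fin n → ℝ) (S : Finset (Fin n)) (i : Fin n) (ξ : ℝ) :
    HasDerivAt (fun ξ => mlq y v S i ξ) (mld v S i) ξ := by
  unfold mlq mld
  by_cases h : i ∈ S <;> simp only [h, if_true, if_false]
  · simpa using ((hasDerivAt_id ξ).mul_const (v i)).const_add (y i)
  · simpa using (((hasDerivAt_id ξ).mul_const (v i)).const_add (y i)).const_sub 1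

/-- Splitting a sum over all subsets of a fintype according to membership of
two distinct elements `i`, `j`. -/
lemma sum_subsets_four {α : Type*} [DecidableEq α] [Fintype α] (i j : α) (hij : i ≠ j)
    (F : Finset α → ℝ) :
    ∑ S : Finset α, F S =
      ∑ t ∈ (((univ : Finset α).erase i).erase j).powerset,
        (F t + F (insert j t) + F (insert i t) + F (insert i (insert j t))) := by
  set s := ((univ : Finset α).erase i).erase j with hs
  have hj : j ∉ s := fun h => (Finset.mem_erase.1 h).1 rfl
  have hi : i ∉ insert j s := by
    simp only [Finset.mem_insert]
    rintro (h | h)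
    · exact hij h
    · exact (Finset.mem_erase.1 (Finset.mem_erase.1 h).2).1 rfl
  have h1 : insert j s = (univ : Finset α).erase i :=
    Finset.insert_erase (Finset.mem_erase.2 ⟨fun h => hij h.symm, Finset.mem_univ j⟩)
  have h2 : insert i (insert j s) = univ := by
    rw [h1]; exact Finset.insert_erase (Finset.mem_univ i)
  have hmain : (univ : Finset α) = insert i (insert j s) := h2.symm
  conv_lhs => rw [← Finset.powerset_univ, hmain]
  rw [Finset.sum_powerset_insert hi, Finset.sum_powerset_insert hj,
    Finset.sum_powerset_insert hj]
  simp only [Finset.sum_add_distrib]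
  ring

/-- For a submodular `f` with multilinear extension `F`, `y ∈ [0,1]ⁿ` and `v ≥ 0`,
the function `ξ ↦ F(y + ξ·v)` is concave on
`I = {ξ ≥ 0 : y + ξ·v ∈ [0,1]ⁿ}`. -/
theorem stmt_6 {n : ℕ} (f : Finset (Fin n) → ℝ)
    (hsub : ∀ A B : Finset (Fin n), f A + f B ≥ f (A ∪ B) + f (A ∩ B))
    (y v : Fin n → ℝ)
    (hy : ∀ i, y i ∈ Set.Icc (0 : ℝ) 1) (hv : ∀ i, 0 ≤ v i) :
    ConcaveOn ℝ {ξ : ℝ | 0 ≤ ξ ∧ ∀ i, y i + ξ * v i ∈ Set.Icc (0 : ℝ) 1}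
      (fun ξ => multilinearExt f (fun i => y i + ξ * v i)) := by
  classical
  set D : Set ℝ := {ξ : ℝ | 0 ≤ ξ ∧ ∀ i, y i + ξ * v i ∈ Set.Icc (0 : ℝ) 1} with hDdef
  -- the function we study, in product form, and its two derivatives
  set g : ℝ → ℝ := fun ξ => ∑ S : Finset (Fin n), f S * ∏ i, mlq y v S i ξ with hg
  set g1 : ℝ → ℝ := fun ξ => ∑ S : Finset (Fin n),
      f S * ∑ i, (∏ j ∈ (univ : Finset (Fin n)).erase i, mlq y v S j ξ) * mld v S i with hg1
  set g2 : ℝ → ℝ := fun ξ => ∑ S : Finset (Fin n),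
      f S * ∑ i, (∑ j ∈ (univ : Finset (Fin n)).erase i,
        (∏ k ∈ ((univ : Finset (Fin n)).erase i).erase j, mlq y v S k ξ) * mld v S j)
          * mld v S i with hg2
  -- the statement's function equals `g`
  have hgeq : (fun ξ => multilinearExt f (fun i => y i + ξ * v i)) = g := by
    funext ξ
    unfold multilinearExt
    refine Finset.sum_congr rfl fun S _ => ?_
    congr 1
    rw [← Finset.prod_mul_prod_compl S (fun i => mlq y v S i ξ)]
    congr 1
    · exact Finset.prod_congr rfl fun i hi => by simp [mlq, hi]
    · refine Finset.prod_congr rfl fun i hi => ?_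
      simp only [Finset.mem_compl] at hi
      simp [mlq, hi]
  -- first derivative
  have hd1 : ∀ ξ : ℝ, HasDerivAt g (g1 ξ) ξ := by
    intro ξ
    refine HasDerivAt.fun_sum fun S _ => ?_
    refine HasDerivAt.const_mul (f S) ?_
    have := HasDerivAt.fun_finsetProd (u := (univ : Finset (Fin n)))
      (f := fun i ξ => mlq y v S i ξ) (f' := fun i => mld v S i) (x := ξ)
      (fun i _ => mlq_hasDerivAt y v S i ξ)
    simpa [smul_eq_mul] using this
  -- second derivative
  have hd2 : ∀ ξ : ℝ, HasDerivAt g1 (g2 ξ) ξ := by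
    intro ξ
    refine HasDerivAt.fun_sum fun S _ => ?_
    refine HasDerivAt.const_mul (f S) ?_
    refine HasDerivAt.fun_sum fun i _ => ?_
    refine HasDerivAt.mul_const ?_ (mld v S i)
    have := HasDerivAt.fun_finsetProd (u := (univ : Finset (Fin n)).erase i)
      (f := fun j ξ => mlq y v S j ξ) (f' := fun j => mld v S j) (x := ξ)
      (fun j _ => mlq_hasDerivAt y v S j ξ)
    simpa [smul_eq_mul] using this
  -- nonnegativity of factors on D
  have hqnn : ∀ ξ ∈ D, ∀ (S : Finset (Fin n)) (i : Fin n), 0 ≤ mlq y v S i ξ := by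
    intro ξ hξ S i
    obtain ⟨h0, h1⟩ := hξ.2 i
    unfold mlq
    split <;> linarith
  -- the key pairwise inequality
  have key : ∀ ξ ∈ D, ∀ i : Fin n, ∀ j ∈ (univ : Finset (Fin n)).erase i,
      ∑ S : Finset (Fin n),
        f S * (mld v S i * mld v S j *
          ∏ k ∈ ((univ : Finset (Fin n)).erase i).erase j, mlq y v S k ξ) ≤ 0 := by
    intro ξ hξ i j hj
    have hji : j ≠ i := (Finset.mem_erase.1 hj).1
    have hij : i ≠ j := fun h => hji h.symm
    set s := ((univ : Finset (Fin n)).erase i).erase j with hs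
    rw [sum_subsets_four i j hij]
    refine Finset.sum_nonpos fun t ht => ?_
    have hts : t ⊆ s := Finset.mem_powerset.1 ht
    have hit : i ∉ t := fun h =>
      (Finset.mem_erase.1 (Finset.mem_erase.1 (hts h)).2).1 rfl
    have hjt : j ∉ t := fun h => (Finset.mem_erase.1 (hts h)).1 rfl
    -- evaluate the sign factors
    have e1 : mld v t i = -v i := by simp [mld, hit]
    have e2 : mld v t j = -v j := by simp [mld, hjt]
    have e3 : mld v (insert j t) i = -v i := by simp [mld, hij, hit]
    have e4 : mld v (insert j t) j = v j := by simp [mld]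
    have e5 : mld v (insert i t) i = v i := by simp [mld]
    have e6 : mld v (insert i t) j = -v j := by simp [mld, hji, hjt]
    have e7 : mld v (insert i (insert j t)) i = v i := by simp [mld]
    have e8 : mld v (insert i (insert j t)) j = v j := by simp [mld]
    -- the products only depend on `t`
    have hprod : ∀ S : Finset (Fin n), (∀ k ∈ s, (k ∈ S ↔ k ∈ t)) →
        ∏ k ∈ s, mlq y v S k ξ = ∏ k ∈ s, mlq y v t k ξ := by
      intro S hS
      refine Finset.prod_congr rfl fun k hk => ?_
      unfold mlq
      simp only [hS k hk]
    have hmemP : ∀ k ∈ s, k ≠ i ∧ k ≠ j := fun k hk =>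
      ⟨(Finset.mem_erase.1 (Finset.mem_erase.1 hk).2).1, (Finset.mem_erase.1 hk).1⟩
    have p1 : ∏ k ∈ s, mlq y v (insert j t) k ξ = ∏ k ∈ s, mlq y v t k ξ :=
      hprod _ fun k hk => by simp [Finset.mem_insert, (hmemP k hk).2]
    have p2 : ∏ k ∈ s, mlq y v (insert i t) k ξ = ∏ k ∈ s, mlq y v t k ξ :=
      hprod _ fun k hk => by simp [Finset.mem_insert, (hmemP k hk).1]
    have p3 : ∏ k ∈ s, mlq y v (insert i (insert j t)) k ξ = ∏ k ∈ s, mlq y v t k ξ :=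
      hprod _ fun k hk => by
        simp [Finset.mem_insert, (hmemP k hk).1, (hmemP k hk).2]
    have hQ : 0 ≤ ∏ k ∈ s, mlq y v t k ξ :=
      Finset.prod_nonneg fun k _ => hqnn ξ hξ t k
    -- submodularity
    have hun : insert i t ∪ insert j t = insert i (insert j t) := by
      ext k
      simp only [Finset.mem_union, Finset.mem_insert]
      tauto
    have hin : insert i t ∩ insert j t = t := by
      ext k
      simp only [Finset.mem_inter, Finset.mem_insert]
      constructor
      · rintro ⟨h1 | h1, h2 | h2⟩
        · exact absurd (h1.symm.trans h2) hij
        · exact absurd (h1 ▸ h2) hit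
        · exact absurd (h2 ▸ h1) hjt
        · exact h1
      · exact fun h => ⟨Or.inr h, Or.inr h⟩
    have hb := hsub (insert i t) (insert j t)
    rw [hun, hin] at hb
    rw [e1, e2, e3, e4, e5, e6, e7, e8, p1, p2, p3]
    have : f t * (-v i * -v j * ∏ k ∈ s, mlq y v t k ξ) +
        f (insert j t) * (-v i * v j * ∏ k ∈ s, mlq y v t k ξ) +
        f (insert i t) * (v i * -v j * ∏ k ∈ s, mlq y v t k ξ) +
        f (insert i (insert j t)) * (v i * v j * ∏ k ∈ s, mlq y v t k ξ) =
        (f (insert i (insert j t)) + f t - f (insert j t) - f (insert i t)) *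
          (v i * v j * ∏ k ∈ s, mlq y v t k ξ) := by ring
    rw [this]
    exact mul_nonpos_iff.2 (Or.inr ⟨by linarith,
      mul_nonneg (mul_nonneg (hv i) (hv j)) hQ⟩)
  -- the second derivative is nonpositive on D
  have hg2le : ∀ ξ ∈ D, g2 ξ ≤ 0 := by
    intro ξ hξ
    have hswap : g2 ξ = ∑ i, ∑ j ∈ (univ : Finset (Fin n)).erase i,
        ∑ S : Finset (Fin n),
          f S * (mld v S i * mld v S j *
            ∏ k ∈ ((univ : Finset (Fin n)).erase i).erase j, mlq y v S k ξ) := by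
      rw [hg2]
      simp only [Finset.mul_sum, Finset.sum_mul]
      rw [Finset.sum_comm]
      refine Finset.sum_congr rfl fun i _ => ?_
      rw [Finset.sum_comm]
      exact Finset.sum_congr rfl fun j _ => Finset.sum_congr rfl fun S _ => by ring
    rw [hswap]
    exact Finset.sum_nonpos fun i _ => Finset.sum_nonpos fun j hj => key ξ hξ i j hj
  -- convexity of the domain
  have hDconv : Convex ℝ D := by
    intro ξ₁ h1 ξ₂ h2 a b ha hb hab
    refine ⟨add_nonneg (mul_nonneg ha h1.1) (mul_nonneg hb h2.1), fun i => ?_⟩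
    have e : y i + (a • ξ₁ + b • ξ₂) * v i =
        a * (y i + ξ₁ * v i) + b * (y i + ξ₂ * v i) := by
      simp only [smul_eq_mul]
      linear_combination (-(y i)) * hab
    obtain ⟨l1, u1⟩ := h1.2 i
    obtain ⟨l2, u2⟩ := h2.2 i
    rw [Set.mem_Icc, e]
    constructor
    · have := mul_nonneg ha l1
      have := mul_nonneg hb l2
      linarith
    · have := mul_le_mul_of_nonneg_left u1 ha
      have := mul_le_mul_of_nonneg_left u2 hb
      nlinarith
  -- conclude
  rw [hgeq]
  refine concaveOn_of_hasDerivWithinAt2_nonpos hDconv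
    (fun ξ _ => (hd1 ξ).continuousAt.continuousWithinAt)
    (f' := g1) (f'' := g2)
    (fun ξ _ => (hd1 ξ).hasDerivWithinAt)
    (fun ξ _ => (hd2 ξ).hasDerivWithinAt)
    (fun ξ hξ => hg2le ξ (interior_subset hξ))
end

section
/- Let f be a submodular function on the ground set {1,…,n} with f(∅) ≥ 0 and multilinear extension F. Then for every S ⊆ {1,…,n} and every t ∈ [0,1], F(t·1_S) ≥ t·f(S), where 1_S denotes the indicator vector of S. -/
open Finset

lemma aux_sub {n : ℕ} {t : ℝ} (ht0 : 0 ≤ t) (ht1 : t ≤ 1) :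
    ∀ (S : Finset (Fin n)) (f : Finset (Fin n) → ℝ),
      (∀ A B, f A + f B ≥ f (A ∪ B) + f (A ∩ B)) →
      ∑ T ∈ S.powerset, f T * (t ^ T.card * (1 - t) ^ (S \ T).card)
        ≥ t * f S + (1 - t) * f ∅ := by
  intro S
  induction S using Finset.induction_on with
  | empty =>
      intro f hsub
      simp [le_refl]
      ring_nf
      linarith
  | @insert a S' ha ih =>
      intro f hsub
      rw [Finset.sum_powerset_insert ha]
      have hsub' : ∀ A B : Finset (Fin n),
          (fun A => f (insert a A)) A + (fun A => f (insert a A)) B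
            ≥ (fun A => f (insert a A)) (A ∪ B) + (fun A => f (insert a A)) (A ∩ B) := by
        intro A B
        have h := hsub (insert a A) (insert a B)
        have hu : insert a A ∪ insert a B = insert a (A ∪ B) := by
          ext x; simp only [Finset.mem_insert, Finset.mem_union]; tauto
        have hi : insert a A ∩ insert a B = insert a (A ∩ B) := by
          ext x; simp only [Finset.mem_insert, Finset.mem_inter]; tauto
        rw [hu, hi] at h
        exact h
      have h1 := ih f hsub
      have h2 := ih (fun A => f (insert a A)) hsub'
      have e1 : ∑ T ∈ S'.powerset, f T * (t ^ T.card * (1 - t) ^ ((insert a S' \ T).card))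
          = (1 - t) * ∑ T ∈ S'.powerset, f T * (t ^ T.card * (1 - t) ^ ((S' \ T).card)) := by
        rw [Finset.mul_sum]
        refine Finset.sum_congr rfl ?_
        intro T hT
        have hTS : T ⊆ S' := Finset.mem_powerset.mp hT
        have haT : a ∉ T := fun h => ha (hTS h)
        have : insert a S' \ T = insert a (S' \ T) := by
          rw [Finset.insert_sdiff_of_notMem _ haT]
        rw [this, Finset.card_insert_of_notMem (by simp [ha])]
        ring
      have e2 : ∑ T ∈ S'.powerset,
            f (insert a T) * (t ^ (insert a T).card * (1 - t) ^ ((insert a S' \ insert a T).card))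
          = t * ∑ T ∈ S'.powerset, f (insert a T) * (t ^ T.card * (1 - t) ^ ((S' \ T).card)) := by
        rw [Finset.mul_sum]
        refine Finset.sum_congr rfl ?_
        intro T hT
        have hTS : T ⊆ S' := Finset.mem_powerset.mp hT
        have haT : a ∉ T := fun h => ha (hTS h)
        have hd : insert a S' \ insert a T = S' \ T := by
          ext x
          simp only [Finset.mem_sdiff, Finset.mem_insert]
          constructor
          · rintro ⟨hx | hx, hnx⟩
            · exact absurd (Or.inl hx) hnx
            · exact ⟨hx, fun h => hnx (Or.inr h)⟩
          · rintro ⟨hx, hnx⟩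
            exact ⟨Or.inr hx, by rintro (rfl | h); exacts [ha hx, hnx h]⟩
        rw [hd, Finset.card_insert_of_notMem haT]
        ring
      rw [e1, e2]
      have h3 : f {a} + f S' ≥ f (insert a S') + f ∅ := by
        have h := hsub {a} S'
        have hu : {a} ∪ S' = insert a S' := by rw [Finset.insert_eq]
        have hi : {a} ∩ S' = ∅ := by
          ext x; simp; rintro rfl; exact ha
        rwa [hu, hi] at h
      have h2' : ∑ T ∈ S'.powerset, f (insert a T) * (t ^ T.card * (1 - t) ^ ((S' \ T).card))
          ≥ t * f (insert a S') + (1 - t) * f {a} := by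
        simpa using h2
      nlinarith [mul_nonneg ht0 (sub_nonneg.mpr ht1), h1, h2', h3]

/-- For a submodular `f` with `f(∅) ≥ 0` and multilinear extension `F`,
for every `S ⊆ {1,…,n}` and `t ∈ [0,1]`, `F(t·1_S) ≥ t·f(S)`. -/
theorem stmt_7 {n : ℕ} (f : Finset (Fin n) → ℝ)
    (hsub : ∀ A B : Finset (Fin n), f A + f B ≥ f (A ∪ B) + f (A ∩ B))
    (hempty : 0 ≤ f ∅)
    (S : Finset (Fin n)) (t : ℝ) (ht : t ∈ Set.Icc (0 : ℝ) 1) :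
    multilinearExt f (fun i => if i ∈ S then t else 0) ≥ t * f S := by
  obtain ⟨ht0, ht1⟩ := ht
  have key := aux_sub ht0 ht1 S f hsub
  have heq : multilinearExt f (fun i => if i ∈ S then t else 0)
      = ∑ T ∈ S.powerset, f T * (t ^ T.card * (1 - t) ^ ((S \ T).card)) := by
    unfold multilinearExt
    rw [← Finset.sum_subset (Finset.subset_univ S.powerset)]
    · refine Finset.sum_congr rfl ?_
      intro T hT
      have hTS : T ⊆ S := Finset.mem_powerset.mp hT
      congr 1
      have hp1 : (∏ i ∈ T, (if i ∈ S then t else 0)) = t ^ T.card := by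
        rw [Finset.prod_congr rfl (fun i hi => if_pos (hTS hi))]
        simp
      have hp2 : (∏ i ∈ Tᶜ, (1 - (if i ∈ S then t else 0))) = (1 - t) ^ ((S \ T).card) := by
        have : ∀ i ∈ Tᶜ, (1 - (if i ∈ S then t else 0)) = if i ∈ S then (1 - t) else 1 := by
          intro i _; split <;> simp
        rw [Finset.prod_congr rfl this, Finset.prod_ite, Finset.prod_const, Finset.prod_const,
          one_pow, mul_one]
        have hfe : Tᶜ.filter (fun x => x ∈ S) = S \ T := by
          ext x; simp [and_comm]
        rw [hfe]
      rw [hp1, hp2]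
    · intro T _ hT
      obtain ⟨i, hiT, hiS⟩ : ∃ i ∈ T, i ∉ S := by
        by_contra h
        push_neg at h
        exact hT (Finset.mem_powerset.mpr h)
      rw [Finset.prod_eq_zero hiT (by simp [hiS])]
      ring
  rw [heq]
  calc ∑ T ∈ S.powerset, f T * (t ^ T.card * (1 - t) ^ ((S \ T).card))
      ≥ t * f S + (1 - t) * f ∅ := key
    _ ≥ t * f S := by nlinarith
end

section
/- Let f be a submodular function on the ground set {1,…,n} with multilinear extension F. Let y ∈ [0,1]^n and v ∈ ℝ^n with v ≥ 0 componentwise and y + v ∈ [0,1]^n. Then F(y + v) − F(y) ≤ ∑_{j=1}^{n} v_j · (F(y[j:=1]) − F(y[j:=0])), where y[j:=c] denotes the vector y with its j-th coordinate replaced by c. -/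
open Finset

namespace Stmt8Aux

variable {n : ℕ}

/-- the partial derivative of `F` in direction `j` -/
noncomputable def dF (f : Finset (Fin n) → ℝ) (j : Fin n) (x : Fin n → ℝ) : ℝ :=
  multilinearExt f (Function.update x j 1) - multilinearExt f (Function.update x j 0)

lemma one_sub_update (x : Fin n → ℝ) (j : Fin n) (c : ℝ) (i : Fin n) :
    1 - Function.update x j c i = Function.update (fun i => 1 - x i) j (1 - c) i := by
  rcases eq_or_ne i j with h | h
  · subst h; simp
  · simp [Function.update_of_ne h]

/-- `F` is affine in each coordinate. -/
lemma affine (f : Finset (Fin n) → ℝ) (x : Fin n → ℝ) (j : Fin n) (c : ℝ) :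
    multilinearExt f (Function.update x j c)
      = multilinearExt f (Function.update x j 0) + c * dF f j x := by
  unfold dF multilinearExt
  rw [← Finset.sum_sub_distrib, Finset.mul_sum, ← Finset.sum_add_distrib]
  refine Finset.sum_congr rfl fun S _ => ?_
  simp only [one_sub_update]
  by_cases hS : j ∈ S
  · have hSc : j ∉ Sᶜ := by simp [hS]
    simp only [Finset.prod_update_of_mem hS, Finset.prod_update_of_notMem hSc]
    ring
  · have hSc : j ∈ Sᶜ := by simp [hS]
    simp only [Finset.prod_update_of_notMem hS, Finset.prod_update_of_mem hSc]
    ring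

lemma diff_eq (f : Finset (Fin n) → ℝ) (x : Fin n → ℝ) (j : Fin n) (b c : ℝ) :
    multilinearExt f (Function.update x j c) - multilinearExt f (Function.update x j b)
      = (c - b) * dF f j x := by
  rw [affine f x j c, affine f x j b]; ring

lemma diff_eq' (f : Finset (Fin n) → ℝ) (x : Fin n → ℝ) (j : Fin n) (c : ℝ) :
    multilinearExt f (Function.update x j c) - multilinearExt f x
      = (c - x j) * dF f j x := by
  have h := diff_eq f x j (x j) c
  rwa [Function.update_eq_self] at h

/-- second mixed differences are nonpositive, by submodularity -/
lemma second_diff (f : Finset (Fin n) → ℝ)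
    (hsub : ∀ A B : Finset (Fin n), f A + f B ≥ f (A ∪ B) + f (A ∩ B))
    (x : Fin n → ℝ) (hx : ∀ i, x i ∈ Set.Icc (0 : ℝ) 1) {j k : Fin n} (hjk : j ≠ k) :
    dF f j (Function.update x k 1) ≤ dF f j (Function.update x k 0) := by
  have key : ∀ a b : ℝ,
      multilinearExt f (Function.update (Function.update x k b) j a)
        = ∑ S : Finset (Fin n), f S *
            ((∏ i ∈ S, Function.update (Function.update x k b) j a i) *
             ∏ i ∈ Sᶜ, (1 - Function.update (Function.update x k b) j a i)) :=
    fun a b => rfl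
  -- reduce to a single sum being nonpositive
  have main : multilinearExt f (Function.update (Function.update x k 1) j 1)
      - multilinearExt f (Function.update (Function.update x k 1) j 0)
      - multilinearExt f (Function.update (Function.update x k 0) j 1)
      + multilinearExt f (Function.update (Function.update x k 0) j 0) ≤ 0 := by
    set u : ℝ → ℝ → Fin n → ℝ := fun a b => Function.update (Function.update x k b) j a with hu
    have expand : multilinearExt f (u 1 1) - multilinearExt f (u 0 1)
        - multilinearExt f (u 1 0) + multilinearExt f (u 0 0)
        = ∑ S : Finset (Fin n), (f S *
            ((∏ i ∈ S, u 1 1 i) * ∏ i ∈ Sᶜ, (1 - u 1 1 i))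
          - f S * ((∏ i ∈ S, u 0 1 i) * ∏ i ∈ Sᶜ, (1 - u 0 1 i))
          - f S * ((∏ i ∈ S, u 1 0 i) * ∏ i ∈ Sᶜ, (1 - u 1 0 i))
          + f S * ((∏ i ∈ S, u 0 0 i) * ∏ i ∈ Sᶜ, (1 - u 0 0 i))) := by
      simp only [multilinearExt, Finset.sum_sub_distrib, Finset.sum_add_distrib]
    rw [show multilinearExt f (Function.update (Function.update x k 1) j 1)
      - multilinearExt f (Function.update (Function.update x k 1) j 0)
      - multilinearExt f (Function.update (Function.update x k 0) j 1)
      + multilinearExt f (Function.update (Function.update x k 0) j 0)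
      = multilinearExt f (u 1 1) - multilinearExt f (u 0 1)
        - multilinearExt f (u 1 0) + multilinearExt f (u 0 0) from by rw [hu], expand]
    set R : Finset (Fin n) := (univ.erase j).erase k with hR
    have hkR : k ∉ R := by simp [hR]
    have hjR : j ∉ insert k R := by simp [hR, hjk]
    have huniv : (univ : Finset (Fin n)) = insert j (insert k R) := by
      ext i
      simp only [hR, Finset.mem_insert, Finset.mem_erase, Finset.mem_univ, and_true,
        iff_true]
      tauto
    rw [← Finset.powerset_univ, huniv, Finset.sum_powerset_insert hjR,
      Finset.sum_powerset_insert hkR, Finset.sum_powerset_insert hkR,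
      ← Finset.sum_add_distrib, ← Finset.sum_add_distrib, ← Finset.sum_add_distrib]
    apply Finset.sum_nonpos
    intro T hT
    have hTR : T ⊆ R := Finset.mem_powerset.mp hT
    have hjT : j ∉ T := fun h => by simpa [hR] using hTR h
    have hkT : k ∉ T := fun h => by simpa [hR] using hTR h
    have hjkT : j ∉ insert k T := by simp [hjk, hjT]
    have hjTc : j ∈ Tᶜ := Finset.mem_compl.mpr hjT
    have hkTc : k ∈ Tᶜ := Finset.mem_compl.mpr hkT
    have hkj : k ≠ j := hjk.symm
    -- products over the sets
    have hpT : ∀ a b : ℝ, ∏ i ∈ T, u a b i = ∏ i ∈ T, x i := by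
      intro a b
      rw [hu]
      rw [Finset.prod_update_of_notMem hjT, Finset.prod_update_of_notMem hkT]
    have hpkT : ∀ a b : ℝ, ∏ i ∈ insert k T, u a b i = b * ∏ i ∈ T, x i := by
      intro a b
      rw [Finset.prod_insert hkT, hpT a b]
      congr 1
      rw [hu]
      simp [Function.update_of_ne hkj]
    have hpjT : ∀ a b : ℝ, ∏ i ∈ insert j T, u a b i = a * ∏ i ∈ T, x i := by
      intro a b
      rw [Finset.prod_insert hjT, hpT a b]
      congr 1
      rw [hu]; simp
    have hpjkT : ∀ a b : ℝ, ∏ i ∈ insert j (insert k T), u a b i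
        = a * (b * ∏ i ∈ T, x i) := by
      intro a b
      rw [Finset.prod_insert hjkT, hpkT a b]
      congr 1
      rw [hu]; simp
    -- complement products
    have hone : ∀ (a b : ℝ) (i : Fin n), 1 - u a b i
        = Function.update (Function.update (fun i => 1 - x i) k (1 - b)) j (1 - a) i := by
      intro a b i
      rw [hu]
      rcases eq_or_ne i j with h | h
      · subst h; simp
      · rcases eq_or_ne i k with h2 | h2
        · subst h2; simp [Function.update_of_ne h]
        · simp [Function.update_of_ne h, Function.update_of_ne h2]
    have hcT : ∀ a b : ℝ, ∏ i ∈ Tᶜ, (1 - u a b i)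
        = (1 - a) * ((1 - b) * ∏ i ∈ (Tᶜ.erase j).erase k, (1 - x i)) := by
      intro a b
      simp only [hone]
      rw [Finset.prod_update_of_mem hjTc, Finset.sdiff_singleton_eq_erase,
        Finset.prod_update_of_mem (Finset.mem_erase.mpr ⟨hkj, hkTc⟩),
        Finset.sdiff_singleton_eq_erase]
    have hckT : ∀ a b : ℝ, ∏ i ∈ (insert k T)ᶜ, (1 - u a b i)
        = (1 - a) * ∏ i ∈ (Tᶜ.erase j).erase k, (1 - x i) := by
      intro a b
      have hknotin : k ∉ (Tᶜ.erase k).erase j :=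
        fun h => Finset.notMem_erase k Tᶜ (Finset.mem_of_mem_erase h)
      simp only [hone, Finset.compl_insert]
      rw [Finset.prod_update_of_mem (Finset.mem_erase.mpr ⟨hjk, hjTc⟩),
        Finset.sdiff_singleton_eq_erase, Finset.prod_update_of_notMem hknotin,
        Finset.erase_right_comm]
    have hcjT : ∀ a b : ℝ, ∏ i ∈ (insert j T)ᶜ, (1 - u a b i)
        = (1 - b) * ∏ i ∈ (Tᶜ.erase j).erase k, (1 - x i) := by
      intro a b
      simp only [hone, Finset.compl_insert]
      rw [Finset.prod_update_of_notMem (Finset.notMem_erase j Tᶜ),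
        Finset.prod_update_of_mem (Finset.mem_erase.mpr ⟨hkj, hkTc⟩),
        Finset.sdiff_singleton_eq_erase]
    have hcjkT : ∀ a b : ℝ, ∏ i ∈ (insert j (insert k T))ᶜ, (1 - u a b i)
        = ∏ i ∈ (Tᶜ.erase j).erase k, (1 - x i) := by
      intro a b
      have hknotin : k ∉ (Tᶜ.erase k).erase j :=
        fun h => Finset.notMem_erase k Tᶜ (Finset.mem_of_mem_erase h)
      simp only [hone, Finset.compl_insert]
      rw [Finset.prod_update_of_notMem (Finset.notMem_erase j (Tᶜ.erase k)),
        Finset.prod_update_of_notMem hknotin, Finset.erase_right_comm]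
    simp only [hpT, hpkT, hpjT, hpjkT, hcT, hckT, hcjT, hcjkT]
    have hP : (0:ℝ) ≤ ∏ i ∈ T, x i :=
      Finset.prod_nonneg fun i _ => (hx i).1
    have hQ : (0:ℝ) ≤ ∏ i ∈ (Tᶜ.erase j).erase k, (1 - x i) :=
      Finset.prod_nonneg fun i _ => by linarith [(hx i).2]
    have hunion : insert j T ∪ insert k T = insert j (insert k T) := by
      ext i; simp [Finset.mem_insert, Finset.mem_union]; tauto
    have hinter : insert j T ∩ insert k T = T := by
      ext i
      simp only [Finset.mem_inter, Finset.mem_insert]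
      constructor
      · rintro ⟨h1 | h1, h2 | h2⟩
        · exact absurd (h1.symm.trans h2) hjk
        · exact h2
        · exact h1
        · exact h1
      · intro h; exact ⟨Or.inr h, Or.inr h⟩
    have hs := hsub (insert j T) (insert k T)
    rw [hunion, hinter] at hs
    nlinarith [mul_nonneg hP hQ, hs]
  have h1 := main
  unfold dF
  linarith


lemma dF_update_self (f : Finset (Fin n) → ℝ) (j : Fin n) (x : Fin n → ℝ) (c : ℝ) :
    dF f j (Function.update x j c) = dF f j x := by
  unfold dF
  rw [Function.update_idem, Function.update_idem]

lemma mono_step (f : Finset (Fin n) → ℝ)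
    (hsub : ∀ A B : Finset (Fin n), f A + f B ≥ f (A ∪ B) + f (A ∩ B))
    (x : Fin n → ℝ) (hx : ∀ i, x i ∈ Set.Icc (0 : ℝ) 1) (j k : Fin n)
    {c c' : ℝ} (h : c ≤ c') :
    dF f j (Function.update x k c') ≤ dF f j (Function.update x k c) := by
  rcases eq_or_ne k j with rfl | hkj
  · rw [dF_update_self, dF_update_self]
  · have hjk : j ≠ k := hkj.symm
    have hD := second_diff f hsub x hx hjk
    have expand : ∀ c : ℝ, dF f j (Function.update x k c)
        = dF f j (Function.update x k 0)
          + c * (dF f j (Function.update x k 1) - dF f j (Function.update x k 0)) := by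
      intro c
      unfold dF
      simp only [Function.update_comm hkj]
      rw [affine f (Function.update x j 1) k c, affine f (Function.update x j 0) k c]
      unfold dF
      ring
    rw [expand c', expand c]
    nlinarith

/-- the partial derivative is antitone -/
lemma dF_antitone (f : Finset (Fin n) → ℝ)
    (hsub : ∀ A B : Finset (Fin n), f A + f B ≥ f (A ∪ B) + f (A ∩ B))
    (j : Fin n) (x₁ x₂ : Fin n → ℝ)
    (h1 : ∀ i, x₁ i ∈ Set.Icc (0 : ℝ) 1) (h2 : ∀ i, x₂ i ∈ Set.Icc (0 : ℝ) 1)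
    (hle : ∀ i, x₁ i ≤ x₂ i) :
    dF f j x₂ ≤ dF f j x₁ := by
  set p : ℕ → Fin n → ℝ := fun m i => if (i : ℕ) < m then x₂ i else x₁ i with hp
  have hp0 : p 0 = x₁ := by funext i; simp [hp]
  have hpn : p n = x₂ := by funext i; simp [hp, i.isLt]
  have hbox : ∀ m, ∀ i, p m i ∈ Set.Icc (0 : ℝ) 1 := by
    intro m i
    by_cases h : (i : ℕ) < m <;> simp only [hp, h, if_true, if_false] <;>
      [exact h2 i; exact h1 i]
  have key : ∀ m : ℕ, dF f j (p m) ≤ dF f j (p 0) := by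
    intro m
    induction m with
    | zero => exact le_rfl
    | succ m ih =>
      rcases lt_or_ge m n with hm | hm
      · set k : Fin n := ⟨m, hm⟩ with hk
        have hupd : p (m + 1) = Function.update (p m) k (x₂ k) := by
          funext i
          rcases eq_or_ne i k with rfl | hik
          · simp [hp, hk, Function.update_self]
          · have : (i : ℕ) ≠ m := fun hh => hik (Fin.ext (by simp [hk, hh]))
            have : ((i : ℕ) < m + 1) ↔ ((i : ℕ) < m) := by omega
            simp [hp, Function.update_of_ne hik, this]
        have hself : p m = Function.update (p m) k (x₁ k) := by
          have : p m k = x₁ k := by simp [hp, hk]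
          rw [← this, Function.update_eq_self]
        calc dF f j (p (m + 1)) = dF f j (Function.update (p m) k (x₂ k)) := by rw [hupd]
          _ ≤ dF f j (Function.update (p m) k (x₁ k)) :=
              mono_step f hsub (p m) (hbox m) j k (hle k)
          _ = dF f j (p m) := by rw [← hself]
          _ ≤ dF f j (p 0) := ih
      · have : p (m + 1) = p m := by
          funext i
          have h1 : (i : ℕ) < m + 1 := by omega
          have h2 : (i : ℕ) < m := by have := i.isLt; omega
          simp [hp, h1, h2]
        rw [this]; exact ih
  have := key n
  rwa [hp0, hpn] at this

end Stmt8Aux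

/-- For a submodular `f` with multilinear extension `F`, `y ∈ [0,1]ⁿ`, `v ≥ 0`
with `y + v ∈ [0,1]ⁿ`,
`F(y + v) − F(y) ≤ ∑_j v_j · (F(y[j:=1]) − F(y[j:=0]))`
(the quantity `F(y[j:=1]) − F(y[j:=0])` is the partial derivative `∂F/∂x_j`). -/
theorem stmt_8 {n : ℕ} (f : Finset (Fin n) → ℝ)
    (hsub : ∀ A B : Finset (Fin n), f A + f B ≥ f (A ∪ B) + f (A ∩ B))
    (y v : Fin n → ℝ)
    (hy : ∀ i, y i ∈ Set.Icc (0 : ℝ) 1) (hv : ∀ i, 0 ≤ v i)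
    (hyv : ∀ i, y i + v i ∈ Set.Icc (0 : ℝ) 1) :
    multilinearExt f (y + v) - multilinearExt f y ≤
      ∑ j : Fin n, v j *
        (multilinearExt f (Function.update y j 1) -
          multilinearExt f (Function.update y j 0)) := by
  set p : ℕ → Fin n → ℝ := fun m i => if (i : ℕ) < m then y i + v i else y i with hp
  have hp0 : p 0 = y := by funext i; simp [hp]
  have hpn : p n = y + v := by funext i; simp [hp, i.isLt]
  have hbox : ∀ m, ∀ i, p m i ∈ Set.Icc (0 : ℝ) 1 := by
    intro m i
    by_cases h : (i : ℕ) < m <;> simp only [hp, h, if_true, if_false] <;>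
      [exact hyv i; exact hy i]
  have tel : multilinearExt f (y + v) - multilinearExt f y
      = ∑ m ∈ Finset.range n, (multilinearExt f (p (m + 1)) - multilinearExt f (p m)) := by
    rw [Finset.sum_range_sub (fun m => multilinearExt f (p m)) n, hp0, hpn]
  rw [tel, ← Fin.sum_univ_eq_sum_range (fun m => multilinearExt f (p (m + 1))
      - multilinearExt f (p m)) n]
  apply Finset.sum_le_sum
  intro j _
  have hupd : p ((j : ℕ) + 1) = Function.update (p (j : ℕ)) j (y j + v j) := by
    funext i
    rcases eq_or_ne i j with rfl | hij
    · simp [hp, Function.update_self]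
    · have hne : (i : ℕ) ≠ (j : ℕ) := fun hh => hij (Fin.ext hh)
      have hiff : ((i : ℕ) < (j : ℕ) + 1) ↔ ((i : ℕ) < (j : ℕ)) := by omega
      simp [hp, Function.update_of_ne hij, hiff]
  have hpj : p (j : ℕ) j = y j := by simp [hp]
  have hdiff : multilinearExt f (p ((j : ℕ) + 1)) - multilinearExt f (p (j : ℕ))
      = v j * Stmt8Aux.dF f j (p (j : ℕ)) := by
    rw [hupd, Stmt8Aux.diff_eq' f (p (j : ℕ)) j (y j + v j), hpj]
    ring
  rw [hdiff]
  have hmono : Stmt8Aux.dF f j (p (j : ℕ)) ≤ Stmt8Aux.dF f j y := by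
    apply Stmt8Aux.dF_antitone f hsub j y (p (j : ℕ)) hy (hbox _)
    intro i
    by_cases h : (i : ℕ) < (j : ℕ) <;> simp only [hp, h, if_true, if_false]
    · linarith [hv i]
    · exact le_rfl
  have hdF : Stmt8Aux.dF f j y = multilinearExt f (Function.update y j 1)
      - multilinearExt f (Function.update y j 0) := rfl
  rw [← hdF]
  exact mul_le_mul_of_nonneg_left hmono (hv j)
end

section
/- Let f be a submodular function on the ground set {1,…,n} with multilinear extension F. Let x, y ∈ [0,1]^n with x ≤ y componentwise, and let j ∈ {1,…,n}. Then F(y[j:=1]) − F(y[j:=0]) ≤ F(x[j:=1]) − F(x[j:=0]); that is, each partial derivative of the multilinear extension is non-increasing with respect to every coordinate. -/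
open Finset

/-- Multilinear extension restricted to a ground set `T`. -/
noncomputable def mle' {n : ℕ} (T : Finset (Fin n)) (g : Finset (Fin n) → ℝ)
    (z : Fin n → ℝ) : ℝ :=
  ∑ S ∈ T.powerset, g S * ((∏ i ∈ S, z i) * ∏ i ∈ T \ S, (1 - z i))

lemma mle_eq {n : ℕ} (f : Finset (Fin n) → ℝ) (z : Fin n → ℝ) :
    multilinearExt f z = mle' Finset.univ f z := by
  unfold multilinearExt mle'
  rw [← Finset.powerset_univ]
  refine Finset.sum_congr rfl fun S _ => by rw [Finset.compl_eq_univ_sdiff]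

lemma mle'_indep {n : ℕ} (T : Finset (Fin n)) (g : Finset (Fin n) → ℝ)
    (z : Fin n → ℝ) (k : Fin n) (hk : k ∉ T) (c : ℝ) :
    mle' T g (Function.update z k c) = mle' T g z := by
  unfold mle'
  refine Finset.sum_congr rfl fun S hS => ?_
  rw [Finset.mem_powerset] at hS
  have p1 : (∏ i ∈ S, Function.update z k c i) = ∏ i ∈ S, z i :=
    Finset.prod_congr rfl fun i hi =>
      Function.update_of_ne (fun h => hk (by rw [← h]; exact hS hi)) _ _
  have p2 : (∏ i ∈ T \ S, (1 - Function.update z k c i)) = ∏ i ∈ T \ S, (1 - z i) :=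
    Finset.prod_congr rfl fun i hi => by
      rw [Function.update_of_ne (fun h => hk (by rw [← h]; exact (Finset.mem_sdiff.mp hi).1))]
  rw [p1, p2]

lemma mle'_split {n : ℕ} (T : Finset (Fin n)) (g : Finset (Fin n) → ℝ)
    (z : Fin n → ℝ) (k : Fin n) (hk : k ∈ T) :
    mle' T g z = (1 - z k) * mle' (T.erase k) g z
      + z k * mle' (T.erase k) (fun S => g (insert k S)) z := by
  unfold mle'
  rw [Finset.mul_sum, Finset.mul_sum, ← Finset.sum_add_distrib]
  rw [show T = insert k (T.erase k) from (Finset.insert_erase hk).symm]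
  rw [Finset.sum_powerset_insert (β := ℝ) (Finset.notMem_erase k T)]
  rw [Finset.erase_insert (Finset.notMem_erase k T)]
  rw [← Finset.sum_add_distrib]
  refine Finset.sum_congr rfl fun S hS => ?_
  rw [Finset.mem_powerset] at hS
  have hkE : k ∉ T.erase k := Finset.notMem_erase k T
  have hkS : k ∉ S := fun h => hkE (hS h)
  have h1 : insert k (T.erase k) \ insert k S = T.erase k \ S := by
    ext i
    simp only [Finset.mem_sdiff, Finset.mem_insert, Finset.mem_erase]
    tauto
  have h2 : insert k (T.erase k) \ S = insert k (T.erase k \ S) := by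
    ext i
    simp only [Finset.mem_sdiff, Finset.mem_insert]
    constructor
    · rintro ⟨h1 | h1, h2⟩
      · exact Or.inl h1
      · exact Or.inr ⟨h1, h2⟩
    · rintro (rfl | ⟨ha, hb⟩)
      · exact ⟨Or.inl rfl, hkS⟩
      · exact ⟨Or.inr ha, hb⟩
  rw [h1, h2, Finset.prod_insert hkS, Finset.prod_insert (by simp)]
  ring

lemma mle'_update_one {n : ℕ} (T : Finset (Fin n)) (g : Finset (Fin n) → ℝ)
    (z : Fin n → ℝ) (k : Fin n) (hk : k ∈ T) :
    mle' T g (Function.update z k 1) = mle' (T.erase k) (fun S => g (insert k S)) z := by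
  rw [mle'_split T g _ k hk, mle'_indep _ _ _ k (Finset.notMem_erase k T),
    mle'_indep _ _ _ k (Finset.notMem_erase k T), Function.update_self]
  ring

lemma mle'_update_zero {n : ℕ} (T : Finset (Fin n)) (g : Finset (Fin n) → ℝ)
    (z : Fin n → ℝ) (k : Fin n) (hk : k ∈ T) :
    mle' T g (Function.update z k 0) = mle' (T.erase k) g z := by
  rw [mle'_split T g _ k hk, mle'_indep _ _ _ k (Finset.notMem_erase k T),
    mle'_indep _ _ _ k (Finset.notMem_erase k T), Function.update_self]
  ring

lemma mle'_step {n : ℕ} (T : Finset (Fin n)) (G : Finset (Fin n) → ℝ)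
    (hG : ∀ k ∈ T, ∀ S ∈ (T.erase k).powerset, G (insert k S) ≤ G S)
    (z : Fin n → ℝ) (hz : ∀ i, z i ∈ Set.Icc (0 : ℝ) 1)
    (k : Fin n) (t : ℝ) (ht : z k ≤ t) :
    mle' T G (Function.update z k t) ≤ mle' T G z := by
  by_cases hk : k ∈ T
  · rw [mle'_split T G _ k hk, mle'_split T G z k hk,
      mle'_indep _ _ _ k (Finset.notMem_erase k T),
      mle'_indep _ _ _ k (Finset.notMem_erase k T), Function.update_self]
    set A := mle' (T.erase k) G z with hA
    set B := mle' (T.erase k) (fun S => G (insert k S)) z with hB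
    have hBA : B - A ≤ 0 := by
      have heq : B - A = ∑ S ∈ (T.erase k).powerset,
          (G (insert k S) - G S) * ((∏ i ∈ S, z i) * ∏ i ∈ T.erase k \ S, (1 - z i)) := by
        rw [hA, hB]
        unfold mle'
        rw [← Finset.sum_sub_distrib]
        exact Finset.sum_congr rfl fun S _ => by ring
      rw [heq]
      refine Finset.sum_nonpos fun S hS => ?_
      refine mul_nonpos_of_nonpos_of_nonneg (by linarith [hG k hk S hS]) ?_
      exact mul_nonneg (Finset.prod_nonneg fun i _ => (hz i).1)
        (Finset.prod_nonneg fun i _ => by linarith [(hz i).2])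
    nlinarith
  · rw [mle'_indep T G z k hk]

/-- Each partial derivative `F(·[j:=1]) − F(·[j:=0])` of the multilinear extension
of a submodular function is non-increasing with respect to every coordinate:
if `x ≤ y` componentwise (both in `[0,1]ⁿ`), then
`F(y[j:=1]) − F(y[j:=0]) ≤ F(x[j:=1]) − F(x[j:=0])`. -/
theorem stmt_9 {n : ℕ} (f : Finset (Fin n) → ℝ)
    (hsub : ∀ A B : Finset (Fin n), f A + f B ≥ f (A ∪ B) + f (A ∩ B))
    (x y : Fin n → ℝ)
    (hx : ∀ i, x i ∈ Set.Icc (0 : ℝ) 1) (hy : ∀ i, y i ∈ Set.Icc (0 : ℝ) 1)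
    (hxy : ∀ i, x i ≤ y i) (j : Fin n) :
    multilinearExt f (Function.update y j 1) -
        multilinearExt f (Function.update y j 0) ≤
      multilinearExt f (Function.update x j 1) -
        multilinearExt f (Function.update x j 0) := by
  set T := Finset.univ.erase j with hT
  set G : Finset (Fin n) → ℝ := fun S => f (insert j S) - f S with hGdef
  have key : ∀ z : Fin n → ℝ,
      multilinearExt f (Function.update z j 1) -
        multilinearExt f (Function.update z j 0) = mle' T G z := by
    intro z
    rw [mle_eq, mle_eq, mle'_update_one _ _ _ j (Finset.mem_univ j),
      mle'_update_zero _ _ _ j (Finset.mem_univ j)]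
    unfold mle'
    rw [← Finset.sum_sub_distrib]
    exact Finset.sum_congr rfl fun S _ => by rw [hGdef]; ring
  rw [key, key]
  have hjT : j ∉ T := Finset.notMem_erase j _
  have hG : ∀ k ∈ T, ∀ S ∈ (T.erase k).powerset, G (insert k S) ≤ G S := by
    intro k hk S hS
    rw [Finset.mem_powerset] at hS
    have hkj : k ≠ j := (Finset.mem_erase.mp hk).1
    have hjS : j ∉ S := fun h => hjT (Finset.mem_of_mem_erase (hS h))
    have hkS : k ∉ S := fun h => (Finset.mem_erase.mp (hS h)).1 rfl
    have hu : insert j S ∪ insert k S = insert j (insert k S) := by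
      ext i; simp only [Finset.mem_union, Finset.mem_insert]; tauto
    have hi : insert j S ∩ insert k S = S := by
      ext i
      simp only [Finset.mem_inter, Finset.mem_insert]
      constructor
      · rintro ⟨h1 | h1, h2 | h2⟩
        · exact absurd (h1.symm.trans h2) hkj.symm
        · exact absurd (h1 ▸ h2 : j ∈ S) hjS
        · exact absurd (h2 ▸ h1 : k ∈ S) hkS
        · exact h1
      · intro h; exact ⟨Or.inr h, Or.inr h⟩
    have hs := hsub (insert j S) (insert k S)
    rw [hu, hi] at hs
    simp only [hGdef]
    linarith
  have chain : ∀ A : Finset (Fin n),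
      mle' T G (fun i => if i ∈ A then y i else x i) ≤ mle' T G x := by
    intro A
    induction A using Finset.induction_on with
    | empty => simp
    | @insert a A ha ih =>
      have heq : (fun i => if i ∈ insert a A then y i else x i)
          = Function.update (fun i => if i ∈ A then y i else x i) a (y a) := by
        funext i
        by_cases h : i = a
        · subst h; simp
        · simp [Function.update_of_ne h, h]
      rw [heq]
      refine le_trans (mle'_step T G hG _ ?_ a (y a) ?_) ih
      · intro i
        by_cases h : i ∈ A <;> simp [h, hx i, hy i]
      · simp [ha, hxy a]
  have hfin := chain Finset.univ
  simpa using hfin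
end

section
/- Let f be a nonnegative submodular function on the ground set {1,…,n} with multilinear extension F. Let y, y', v ∈ ℝ^n with 0 ≤ y ≤ y' componentwise, v ≥ 0 componentwise, and y' + v ∈ [0,1]^n. Then F(y' + v) ≤ F(y + v) + F(y' − y). -/
open Finset

namespace Stmt10Aux

variable {n : ℕ}

/-- The domain of disjoint pairs: pairs `⟨A, B⟩` with `B ⊆ Aᶜ`. -/
noncomputable def D (n : ℕ) : Finset (Σ _ : Finset (Fin n), Finset (Fin n)) :=
  (univ : Finset (Finset (Fin n))).sigma (fun A => Aᶜ.powerset)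

lemma mem_D {p : Σ _ : Finset (Fin n), Finset (Fin n)} :
    p ∈ D n ↔ p.2 ⊆ p.1ᶜ := by
  cases p with
  | mk A B => simp [D, Finset.mem_sigma, Finset.mem_powerset]

/-- Key summation: summing `f` of the first component against the coupling weights
gives the multilinear-type sum with complement weight `h + k`. -/
lemma key_sum (f : Finset (Fin n) → ℝ) (g h k : Fin n → ℝ) :
    ∑ p ∈ D n, f p.1 * ((∏ i ∈ p.1, g i) * (∏ i ∈ p.2, h i) * ∏ i ∈ (p.1 ∪ p.2)ᶜ, k i)
      = ∑ A : Finset (Fin n), f A * ((∏ i ∈ A, g i) * ∏ i ∈ Aᶜ, (h i + k i)) := by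
  rw [D, Finset.sum_sigma]
  refine Finset.sum_congr rfl fun A _ => ?_
  have h1 : ∀ B ∈ Aᶜ.powerset, (A ∪ B)ᶜ = Aᶜ \ B := by
    intro B hB
    rw [Finset.mem_powerset] at hB
    rw [Finset.compl_union]
    ext i
    simp only [Finset.mem_inter, Finset.mem_compl, Finset.mem_sdiff]
  calc ∑ B ∈ Aᶜ.powerset, f A * ((∏ i ∈ A, g i) * (∏ i ∈ B, h i) * ∏ i ∈ (A ∪ B)ᶜ, k i)
      = ∑ B ∈ Aᶜ.powerset, f A * ((∏ i ∈ A, g i) *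
          ((∏ i ∈ B, h i) * ∏ i ∈ Aᶜ \ B, k i)) := by
        refine Finset.sum_congr rfl fun B hB => ?_
        rw [h1 B hB]; ring
    _ = f A * ((∏ i ∈ A, g i) *
          ∑ B ∈ Aᶜ.powerset, (∏ i ∈ B, h i) * ∏ i ∈ Aᶜ \ B, k i) := by
        rw [Finset.mul_sum, Finset.mul_sum]
    _ = f A * ((∏ i ∈ A, g i) * ∏ i ∈ Aᶜ, (h i + k i)) := by
        rw [← Finset.prod_add]

/-- Summing `f` of the union against the coupling weights gives `F(x+z)`. -/
lemma union_sum (f : Finset (Fin n) → ℝ) (x z : Fin n → ℝ) :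
    ∑ p ∈ D n, f (p.1 ∪ p.2) *
        ((∏ i ∈ p.1, x i) * (∏ i ∈ p.2, z i) * ∏ i ∈ (p.1 ∪ p.2)ᶜ, (1 - (x i + z i)))
      = multilinearExt f (x + z) := by
  have step : multilinearExt f (x + z)
      = ∑ p ∈ (univ : Finset (Finset (Fin n))).sigma (fun S => S.powerset),
          f p.1 * ((∏ i ∈ p.2, x i) * (∏ i ∈ p.1 \ p.2, z i) *
            ∏ i ∈ p.1ᶜ, (1 - (x i + z i))) := by
    rw [multilinearExt, Finset.sum_sigma]
    refine Finset.sum_congr rfl fun S _ => ?_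
    have hp : (∏ i ∈ S, (x + z) i)
        = ∑ A ∈ S.powerset, (∏ i ∈ A, x i) * ∏ i ∈ S \ A, z i := by
      simpa using Finset.prod_add x z S
    have hc : (∏ i ∈ Sᶜ, (1 - (x + z) i)) = ∏ i ∈ Sᶜ, (1 - (x i + z i)) := by
      refine Finset.prod_congr rfl fun i _ => by simp
    rw [hp, hc, Finset.sum_mul, Finset.mul_sum]
  rw [step]
  refine (Finset.sum_nbij' (fun q => (⟨q.2, q.1 \ q.2⟩ : Σ _ : Finset (Fin n), Finset (Fin n)))
    (fun p => (⟨p.1 ∪ p.2, p.1⟩ : Σ _ : Finset (Fin n), Finset (Fin n))) ?_ ?_ ?_ ?_ ?_).symm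
  · rintro ⟨S, A⟩ hq
    simp only [Finset.mem_sigma, Finset.mem_powerset, Finset.mem_univ, true_and] at hq
    rw [mem_D]
    exact fun i hi => Finset.mem_compl.2 fun hiA => (Finset.mem_sdiff.1 hi).2 hiA
  · rintro ⟨A, B⟩ _
    exact Finset.mem_sigma.2 ⟨Finset.mem_univ _,
      Finset.mem_powerset.2 Finset.subset_union_left⟩
  · rintro ⟨S, A⟩ hq
    simp only [Finset.mem_sigma, Finset.mem_powerset, Finset.mem_univ, true_and] at hq
    have h1 : A ∪ S \ A = S := Finset.union_sdiff_of_subset hq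
    exact Sigma.ext h1 (by simp)
  · rintro ⟨A, B⟩ hp
    rw [mem_D] at hp
    have h1 : (A ∪ B) \ A = B := by
      ext i
      simp only [Finset.mem_sdiff, Finset.mem_union]
      exact ⟨fun h => h.1.resolve_left h.2,
        fun hiB => ⟨Or.inr hiB, fun hiA => Finset.mem_compl.1 (hp hiB) hiA⟩⟩
    exact Sigma.ext rfl (by simp [h1])
  · rintro ⟨S, A⟩ hq
    simp only [Finset.mem_sigma, Finset.mem_powerset, Finset.mem_univ, true_and] at hq
    have h1 : A ∪ S \ A = S := Finset.union_sdiff_of_subset hq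
    simp only [h1]

/-- Evaluating the first-component sum. -/
lemma fst_eval (f : Finset (Fin n) → ℝ) (x z : Fin n → ℝ) :
    ∑ p ∈ D n, f p.1 *
        ((∏ i ∈ p.1, x i) * (∏ i ∈ p.2, z i) * ∏ i ∈ (p.1 ∪ p.2)ᶜ, (1 - (x i + z i)))
      = multilinearExt f x := by
  rw [key_sum, multilinearExt]
  refine Finset.sum_congr rfl fun A _ => ?_
  have : (∏ i ∈ Aᶜ, (z i + (1 - (x i + z i)))) = ∏ i ∈ Aᶜ, (1 - x i) :=
    Finset.prod_congr rfl fun i _ => by ring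
  rw [this]

/-- Evaluating the second-component sum. -/
lemma snd_eval (f : Finset (Fin n) → ℝ) (x z : Fin n → ℝ) :
    ∑ p ∈ D n, f p.2 *
        ((∏ i ∈ p.1, x i) * (∏ i ∈ p.2, z i) * ∏ i ∈ (p.1 ∪ p.2)ᶜ, (1 - (x i + z i)))
      = multilinearExt f z := by
  have swapped : ∑ p ∈ D n, f p.2 *
        ((∏ i ∈ p.1, x i) * (∏ i ∈ p.2, z i) * ∏ i ∈ (p.1 ∪ p.2)ᶜ, (1 - (x i + z i)))
      = ∑ p ∈ D n, f p.1 *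
        ((∏ i ∈ p.1, z i) * (∏ i ∈ p.2, x i) * ∏ i ∈ (p.1 ∪ p.2)ᶜ, (1 - (z i + x i))) := by
    refine Finset.sum_nbij' (fun p => (⟨p.2, p.1⟩ : Σ _ : Finset (Fin n), Finset (Fin n)))
      (fun p => (⟨p.2, p.1⟩ : Σ _ : Finset (Fin n), Finset (Fin n))) ?_ ?_ ?_ ?_ ?_
    · rintro ⟨A, B⟩ hp
      rw [mem_D] at hp ⊢
      exact Finset.subset_compl_comm.1 hp
    · rintro ⟨A, B⟩ hp
      rw [mem_D] at hp ⊢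
      exact Finset.subset_compl_comm.1 hp
    · rintro ⟨A, B⟩ _; rfl
    · rintro ⟨A, B⟩ _; rfl
    · rintro ⟨A, B⟩ _
      simp only
      rw [Finset.union_comm B A]
      have : (∏ i ∈ (A ∪ B)ᶜ, (1 - (x i + z i))) = ∏ i ∈ (A ∪ B)ᶜ, (1 - (z i + x i)) :=
        Finset.prod_congr rfl fun i _ => by ring
      rw [this]; ring
  rw [swapped]
  have : ∀ p ∈ D n, f p.1 *
        ((∏ i ∈ p.1, z i) * (∏ i ∈ p.2, x i) * ∏ i ∈ (p.1 ∪ p.2)ᶜ, (1 - (z i + x i)))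
      = f p.1 * ((∏ i ∈ p.1, z i) * (∏ i ∈ p.2, x i) * ∏ i ∈ (p.1 ∪ p.2)ᶜ, (1 - (z i + x i))) :=
    fun _ _ => rfl
  exact fst_eval f z x

/-- Subadditivity of the multilinear extension. -/
lemma subadd (f : Finset (Fin n) → ℝ)
    (hsub : ∀ A B : Finset (Fin n), f A + f B ≥ f (A ∪ B) + f (A ∩ B))
    (hnonneg : ∀ A : Finset (Fin n), 0 ≤ f A)
    (x z : Fin n → ℝ) (hx : ∀ i, 0 ≤ x i) (hz : ∀ i, 0 ≤ z i)
    (hxz : ∀ i, x i + z i ≤ 1) :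
    multilinearExt f (x + z) ≤ multilinearExt f x + multilinearExt f z := by
  rw [← union_sum f x z, ← fst_eval f x z, ← snd_eval f x z, ← Finset.sum_add_distrib]
  refine Finset.sum_le_sum fun p _ => ?_
  have hW : 0 ≤ (∏ i ∈ p.1, x i) * (∏ i ∈ p.2, z i) *
      ∏ i ∈ (p.1 ∪ p.2)ᶜ, (1 - (x i + z i)) := by
    refine mul_nonneg (mul_nonneg ?_ ?_) ?_
    · exact Finset.prod_nonneg fun i _ => hx i
    · exact Finset.prod_nonneg fun i _ => hz i
    · exact Finset.prod_nonneg fun i _ => by linarith [hxz i]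
  have hf : f (p.1 ∪ p.2) ≤ f p.1 + f p.2 := by
    have := hsub p.1 p.2
    have := hnonneg (p.1 ∩ p.2)
    linarith
  calc f (p.1 ∪ p.2) * _ ≤ (f p.1 + f p.2) * ((∏ i ∈ p.1, x i) * (∏ i ∈ p.2, z i) *
        ∏ i ∈ (p.1 ∪ p.2)ᶜ, (1 - (x i + z i))) := mul_le_mul_of_nonneg_right hf hW
    _ = _ := by ring

end Stmt10Aux

/-- For a nonnegative submodular `f` with multilinear extension `F`, and vectors
`0 ≤ y ≤ y'`, `v ≥ 0` with `y' + v ∈ [0,1]ⁿ`,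
`F(y' + v) ≤ F(y + v) + F(y' − y)`. -/
theorem stmt_10 {n : ℕ} (f : Finset (Fin n) → ℝ)
    (hsub : ∀ A B : Finset (Fin n), f A + f B ≥ f (A ∪ B) + f (A ∩ B))
    (hnonneg : ∀ A : Finset (Fin n), 0 ≤ f A)
    (y y' v : Fin n → ℝ)
    (hy0 : ∀ i, 0 ≤ y i) (hyy' : ∀ i, y i ≤ y' i) (hv : ∀ i, 0 ≤ v i)
    (hy'v : ∀ i, y' i + v i ∈ Set.Icc (0 : ℝ) 1) :
    multilinearExt f (y' + v) ≤
      multilinearExt f (y + v) + multilinearExt f (y' - y) := by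
  have hxy : y' + v = (y + v) + (y' - y) := by funext i; simp; ring
  rw [hxy]
  exact Stmt10Aux.subadd f hsub hnonneg (y + v) (y' - y)
    (fun i => add_nonneg (hy0 i) (hv i))
    (fun i => sub_nonneg.2 (hyy' i))
    (fun i => by have := (hy'v i).2; simp only [Pi.add_apply, Pi.sub_apply]; linarith)
end

section
/- Let f be a nonnegative submodular function on the ground set {1,…,n} with multilinear extension F (regarded as a polynomial on ℝ^n, with gradient ∇F). Let P ⊆ [0,1]^n be a convex, compact, down-monotone set. Let v : [0,1] → ℝ^n be an integrable function with v(τ) ∈ P for all τ, and define the trajectory y(t) = ∫₀^t v(τ) dτ. Assume that for all τ ∈ [0,1] and all w ∈ P, w · ∇F(y(τ)) ≤ v(τ) · ∇F(y(τ)). Let F_DMAX = max_{0 ≤ t ≤ 1} F(y(1) − y(t)). Then y(1) ∈ P, and for every x ∈ P, F(y(1)) ≥ (1 − e^{−1}) · (F(x ∨ y(1)) − F_DMAX), where (x ∨ y)_i = max(x_i, y_i). -/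
open Finset

/-- The gradient of the multilinear extension: since `F` is multilinear, its
partial derivative `∂F/∂x_j` at `x` equals `F(x[j:=1]) − F(x[j:=0])`. -/
noncomputable def gradMultilinearExt {n : ℕ} (f : Finset (Fin n) → ℝ)
    (x : Fin n → ℝ) (j : Fin n) : ℝ :=
  multilinearExt f (Function.update x j 1) - multilinearExt f (Function.update x j 0)

namespace StmtAux

variable {n : ℕ} (f : Finset (Fin n) → ℝ)

private lemma prod_one_sub_update (s : Finset (Fin n)) (x : Fin n → ℝ) (j : Fin n) (t : ℝ) :
    (∏ i ∈ s, (1 - Function.update x j t i))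
      = ∏ i ∈ s, Function.update (fun i => 1 - x i) j (1 - t) i :=
  Finset.prod_congr rfl fun i _ => by
    by_cases h : i = j
    · subst h; simp
    · simp [Function.update_of_ne h]

lemma mlE_decomp (x : Fin n → ℝ) (j : Fin n) :
    multilinearExt f x = (1 - x j) * multilinearExt f (Function.update x j 0)
      + x j * multilinearExt f (Function.update x j 1) := by
  unfold multilinearExt
  rw [Finset.mul_sum, Finset.mul_sum, ← Finset.sum_add_distrib]
  refine Finset.sum_congr rfl fun S _ => ?_
  by_cases hj : j ∈ S
  · have h0 : (∏ i ∈ S, Function.update x j 0 i) = 0 :=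
      Finset.prod_eq_zero hj (by simp)
    have h1 : (∏ i ∈ S, Function.update x j 1 i) = ∏ i ∈ S \ {j}, x i := by
      rw [Finset.prod_update_of_mem hj]; ring
    have h2 : (∏ i ∈ Sᶜ, (1 - Function.update x j 1 i)) = ∏ i ∈ Sᶜ, (1 - x i) := by
      refine Finset.prod_congr rfl fun i hi => ?_
      have : i ≠ j := fun h => by simp [h, hj] at hi
      rw [Function.update_of_ne this]
    have h3 : (∏ i ∈ S, x i) = x j * ∏ i ∈ S \ {j}, x i := by
      rw [← Finset.prod_update_of_mem hj (f := x) (b := x j)]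
      refine Finset.prod_congr rfl fun i _ => ?_
      by_cases h : i = j <;> simp [h]
    rw [h0, h1, h2, h3]; ring
  · have hjc : j ∈ Sᶜ := Finset.mem_compl.mpr hj
    have h0 : (∏ i ∈ Sᶜ, (1 - Function.update x j 1 i)) = 0 :=
      Finset.prod_eq_zero hjc (by simp)
    have h1 : (∏ i ∈ Sᶜ, (1 - Function.update x j 0 i)) = ∏ i ∈ Sᶜ \ {j}, (1 - x i) := by
      rw [prod_one_sub_update, Finset.prod_update_of_mem hjc]; ring
    have h2 : (∏ i ∈ S, Function.update x j 0 i) = ∏ i ∈ S, x i := by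
      refine Finset.prod_congr rfl fun i hi => ?_
      have : i ≠ j := fun h => hj (h ▸ hi)
      rw [Function.update_of_ne this]
    have h3 : (∏ i ∈ Sᶜ, (1 - x i)) = (1 - x j) * ∏ i ∈ Sᶜ \ {j}, (1 - x i) := by
      rw [← Finset.prod_update_of_mem hjc (f := fun i => 1 - x i) (b := 1 - x j)]
      refine Finset.prod_congr rfl fun i _ => ?_
      by_cases h : i = j <;> simp [h]
    rw [h0, h1, h2, h3]; ring

lemma mlE_update (x : Fin n → ℝ) (j : Fin n) (t : ℝ) :
    multilinearExt f (Function.update x j t)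
      = multilinearExt f (Function.update x j 0) + t * gradMultilinearExt f x j := by
  have h := mlE_decomp f (Function.update x j t) j
  rw [Function.update_idem, Function.update_idem, Function.update_self] at h
  rw [h]; unfold gradMultilinearExt; ring

lemma mlE_update_sub (x : Fin n → ℝ) (j : Fin n) (t : ℝ) :
    multilinearExt f (Function.update x j t) - multilinearExt f x
      = (t - x j) * gradMultilinearExt f x j := by
  have h1 := mlE_update f x j t
  have h2 := mlE_update f x j (x j)
  rw [Function.update_eq_self] at h2
  linear_combination h1 - h2

lemma grad_update_self (x : Fin n → ℝ) (j : Fin n) (t : ℝ) :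
    gradMultilinearExt f (Function.update x j t) j = gradMultilinearExt f x j := by
  unfold gradMultilinearExt
  rw [Function.update_idem, Function.update_idem]

lemma mlE_nonneg (hf : ∀ S, 0 ≤ f S) {x : Fin n → ℝ} (h0 : 0 ≤ x) (h1 : x ≤ 1) :
    0 ≤ multilinearExt f x := by
  have h0' : ∀ i, (0:ℝ) ≤ x i := fun i => by simpa using h0 i
  have h1' : ∀ i, x i ≤ 1 := fun i => by simpa using h1 i
  refine Finset.sum_nonneg fun S _ => mul_nonneg (hf S) (mul_nonneg ?_ ?_)
  · exact Finset.prod_nonneg fun i _ => h0' i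
  · exact Finset.prod_nonneg fun i _ => by linarith [h1' i]

lemma mlE_abs_le {x : Fin n → ℝ} (h0 : 0 ≤ x) (h1 : x ≤ 1) :
    |multilinearExt f x| ≤ ∑ S : Finset (Fin n), |f S| := by
  have h0' : ∀ i, (0:ℝ) ≤ x i := fun i => by simpa using h0 i
  have h1' : ∀ i, x i ≤ 1 := fun i => by simpa using h1 i
  refine (Finset.abs_sum_le_sum_abs _ _).trans (Finset.sum_le_sum fun S _ => ?_)
  rw [abs_mul]
  have hP0 : 0 ≤ ∏ i ∈ S, x i := Finset.prod_nonneg fun i _ => h0' i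
  have hP1 : ∏ i ∈ S, x i ≤ 1 := Finset.prod_le_one (fun i _ => h0' i) (fun i _ => h1' i)
  have hQ0 : 0 ≤ ∏ i ∈ Sᶜ, (1 - x i) :=
    Finset.prod_nonneg fun i _ => by linarith [h1' i]
  have hQ1 : ∏ i ∈ Sᶜ, (1 - x i) ≤ 1 :=
    Finset.prod_le_one (fun i _ => by linarith [h1' i]) (fun i _ => by linarith [h0' i])
  have : |(∏ i ∈ S, x i) * ∏ i ∈ Sᶜ, (1 - x i)| ≤ 1 := by
    rw [abs_of_nonneg (mul_nonneg hP0 hQ0)]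
    calc (∏ i ∈ S, x i) * ∏ i ∈ Sᶜ, (1 - x i) ≤ 1 * 1 :=
      mul_le_mul hP1 hQ1 hQ0 zero_le_one
    _ = 1 := by ring
  calc |f S| * |(∏ i ∈ S, x i) * ∏ i ∈ Sᶜ, (1 - x i)| ≤ |f S| * 1 :=
        mul_le_mul_of_nonneg_left this (abs_nonneg _)
    _ = |f S| := by ring

lemma cube_update {x : Fin n → ℝ} (h0 : 0 ≤ x) (h1 : x ≤ 1) (j : Fin n) {t : ℝ}
    (ht0 : (0:ℝ) ≤ t) (ht1 : t ≤ 1) :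
    0 ≤ Function.update x j t ∧ Function.update x j t ≤ 1 := by
  constructor <;> intro i <;> by_cases h : i = j
  · subst h; simpa using ht0
  · have := h0 i; simp only [Function.update_of_ne h]; simpa using this
  · subst h; simpa using ht1
  · have := h1 i; simp only [Function.update_of_ne h]; simpa using this

lemma abs_grad_le {x : Fin n → ℝ} (h0 : 0 ≤ x) (h1 : x ≤ 1) (j : Fin n) :
    |gradMultilinearExt f x j| ≤ 2 * ∑ S : Finset (Fin n), |f S| := by
  unfold gradMultilinearExt
  have u1 := cube_update h0 h1 j (zero_le_one) (le_refl 1)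
  have u0 := cube_update h0 h1 j (le_refl (0:ℝ)) zero_le_one
  have a1 := mlE_abs_le f u1.1 u1.2
  have a0 := mlE_abs_le f u0.1 u0.2
  calc |multilinearExt f (Function.update x j 1) - multilinearExt f (Function.update x j 0)|
      ≤ |multilinearExt f (Function.update x j 1)| + |multilinearExt f (Function.update x j 0)| :=
        abs_sub _ _
    _ ≤ 2 * ∑ S : Finset (Fin n), |f S| := by linarith

lemma mlE_vertex (A : Finset (Fin n)) :
    multilinearExt f (fun i => if i ∈ A then (1:ℝ) else 0) = f A := by
  unfold multilinearExt
  rw [Finset.sum_eq_single A]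
  · have hp : (∏ i ∈ A, if i ∈ A then (1:ℝ) else 0) = 1 :=
      Finset.prod_eq_one fun i hi => by simp [hi]
    have hq : (∏ i ∈ Aᶜ, (1 - if i ∈ A then (1:ℝ) else 0)) = 1 :=
      Finset.prod_eq_one fun i hi => by simp [Finset.mem_compl.mp hi]
    rw [hp, hq]; ring
  · intro S _ hSA
    by_cases hsub : S ⊆ A
    · obtain ⟨i, hiA, hiS⟩ := Finset.exists_of_ssubset (Finset.ssubset_iff_subset_ne.mpr ⟨hsub, hSA⟩)
      have : (∏ i ∈ Sᶜ, (1 - if i ∈ A then (1:ℝ) else 0)) = 0 :=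
        Finset.prod_eq_zero (Finset.mem_compl.mpr hiS) (by simp [hiA])
      rw [this]; ring
    · obtain ⟨i, hiS, hiA⟩ := Finset.not_subset.mp hsub
      have : (∏ i ∈ S, if i ∈ A then (1:ℝ) else 0) = 0 :=
        Finset.prod_eq_zero hiS (by simp [hiA])
      rw [this]; ring
  · simp

end StmtAux

namespace StmtAux2
open StmtAux
variable {n : ℕ} (f : Finset (Fin n) → ℝ)

lemma cube_nonpos {g : (Fin n → ℝ) → ℝ}
    (hdec : ∀ (k : Fin n) (x : Fin n → ℝ),
      g x = (1 - x k) * g (Function.update x k 0) + x k * g (Function.update x k 1))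
    (hvert : ∀ x : Fin n → ℝ, (∀ i, x i = 0 ∨ x i = 1) → g x ≤ 0)
    {x : Fin n → ℝ} (h0 : 0 ≤ x) (h1 : x ≤ 1) : g x ≤ 0 := by
  suffices H : ∀ (m : ℕ) (x : Fin n → ℝ), 0 ≤ x → x ≤ 1 →
      (Finset.univ.filter (fun i => x i ≠ 0 ∧ x i ≠ 1)).card ≤ m → g x ≤ 0 from
    H _ x h0 h1 le_rfl
  intro m
  induction m with
  | zero =>
    intro x h0 h1 hc
    refine hvert x fun i => ?_
    by_contra hcon
    push_neg at hcon
    have hi : i ∈ Finset.univ.filter (fun i => x i ≠ 0 ∧ x i ≠ 1) := by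
      simp [Finset.mem_filter, hcon.1, hcon.2]
    have := Finset.card_pos.mpr ⟨i, hi⟩
    omega
  | succ m ih =>
    intro x h0 h1 hc
    by_cases hv : ∀ i, x i = 0 ∨ x i = 1
    · exact hvert x hv
    · push_neg at hv
      obtain ⟨k, hk0, hk1⟩ := hv
      have hkmem : k ∈ Finset.univ.filter (fun i => x i ≠ 0 ∧ x i ≠ 1) := by
        simp [Finset.mem_filter, hk0, hk1]
      have hsubset : ∀ t : ℝ, (t = 0 ∨ t = 1) →
          (Finset.univ.filter (fun i => Function.update x k t i ≠ 0 ∧ Function.update x k t i ≠ 1))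
            ⊆ (Finset.univ.filter (fun i => x i ≠ 0 ∧ x i ≠ 1)).erase k := by
        intro t ht i hi
        rw [Finset.mem_filter] at hi
        by_cases hik : i = k
        · exfalso; subst hik; rcases ht with h | h <;> simp [h] at hi
        · rw [Function.update_of_ne hik] at hi
          exact Finset.mem_erase.mpr ⟨hik, Finset.mem_filter.mpr ⟨Finset.mem_univ _, hi.2⟩⟩
      have hcard : ∀ t : ℝ, (t = 0 ∨ t = 1) →
          (Finset.univ.filter (fun i => Function.update x k t i ≠ 0 ∧ Function.update x k t i ≠ 1)).card ≤ m := by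
        intro t ht
        have := Finset.card_le_card (hsubset t ht)
        rw [Finset.card_erase_of_mem hkmem] at this
        omega
      have hk0' : (0:ℝ) ≤ x k := by simpa using h0 k
      have hk1' : x k ≤ 1 := by simpa using h1 k
      have u0 := StmtAux.cube_update h0 h1 k (le_refl (0:ℝ)) zero_le_one
      have u1 := StmtAux.cube_update h0 h1 k zero_le_one (le_refl (1:ℝ))
      have g0 := ih (Function.update x k 0) u0.1 u0.2 (hcard 0 (Or.inl rfl))
      have g1 := ih (Function.update x k 1) u1.1 u1.2 (hcard 1 (Or.inr rfl))
      rw [hdec k x]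
      nlinarith [g0, g1, hk0', hk1']

lemma update_indicator_one (B : Finset (Fin n)) (k : Fin n) :
    Function.update (fun i => if i ∈ B then (1:ℝ) else 0) k 1
      = fun i => if i ∈ insert k B then (1:ℝ) else 0 := by
  funext i
  by_cases h : i = k
  · subst h; simp
  · simp [Function.update_of_ne h, h]

lemma update_indicator_zero (B : Finset (Fin n)) (k : Fin n) :
    Function.update (fun i => if i ∈ B then (1:ℝ) else 0) k 0
      = fun i => if i ∈ B.erase k then (1:ℝ) else 0 := by
  funext i
  by_cases h : i = k
  · subst h; simp
  · simp [Function.update_of_ne h, h]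

lemma grad_second (hsub : ∀ A B : Finset (Fin n), f A + f B ≥ f (A ∪ B) + f (A ∩ B))
    {i j : Fin n} (hij : i ≠ j) {x : Fin n → ℝ} (h0 : 0 ≤ x) (h1 : x ≤ 1) :
    gradMultilinearExt f (Function.update x i 1) j
      ≤ gradMultilinearExt f (Function.update x i 0) j := by
  set U : (Fin n → ℝ) → ℝ → ℝ → (Fin n → ℝ) :=
    fun z a b => Function.update (Function.update z i a) j b with hU
  set g : (Fin n → ℝ) → ℝ := fun z =>
    gradMultilinearExt f (Function.update z i 1) j
      - gradMultilinearExt f (Function.update z i 0) j with hg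
  have hgU : ∀ z, g z = multilinearExt f (U z 1 1) - multilinearExt f (U z 1 0)
      - multilinearExt f (U z 0 1) + multilinearExt f (U z 0 0) := by
    intro z; simp only [hg, hU, gradMultilinearExt]; ring
  have hdec : ∀ (k : Fin n) (z : Fin n → ℝ),
      g z = (1 - z k) * g (Function.update z k 0) + z k * g (Function.update z k 1) := by
    intro k z
    by_cases hki : k = i
    · subst hki
      have e : ∀ t : ℝ, g (Function.update z k t) = g z := by
        intro t; simp only [hg, Function.update_idem]
      rw [e, e]; ring
    by_cases hkj : k = j
    · subst hkj
      have c : ∀ (t a : ℝ), Function.update (Function.update z k t) i a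
          = Function.update (Function.update z i a) k t := fun t a =>
        Function.update_comm hki t a z
      have e : ∀ t : ℝ, g (Function.update z k t) = g z := by
        intro t
        simp only [hg]
        rw [c t 1, c t 0, StmtAux.grad_update_self, StmtAux.grad_update_self]
      rw [e, e]; ring
    · have ecomm : ∀ (a b c : ℝ), Function.update (U z a b) k c = U (Function.update z k c) a b := by
        intro a b c
        simp only [hU]
        rw [Function.update_comm (Ne.symm hkj), Function.update_comm (Ne.symm hki)]
      have hUk : ∀ a b : ℝ, (U z a b) k = z k := by
        intro a b
        simp only [hU]
        rw [Function.update_of_ne hkj, Function.update_of_ne hki]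
      have d : ∀ a b : ℝ, multilinearExt f (U z a b)
          = (1 - z k) * multilinearExt f (U (Function.update z k 0) a b)
            + z k * multilinearExt f (U (Function.update z k 1) a b) := by
        intro a b
        have := StmtAux.mlE_decomp f (U z a b) k
        rw [ecomm, ecomm, hUk] at this
        exact this
      rw [hgU, d, d, d, d, hgU, hgU]
      ring
  have hvert : ∀ z : Fin n → ℝ, (∀ i', z i' = 0 ∨ z i' = 1) → g z ≤ 0 := by
    intro z hz
    set A := Finset.univ.filter (fun i' => z i' = 1) with hA
    have hzA : z = fun i' => if i' ∈ A then (1:ℝ) else 0 := by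
      funext i'
      rcases hz i' with h | h <;> simp [hA, Finset.mem_filter, h]
    rw [hgU, hzA]
    simp only [hU]
    simp only [update_indicator_one, update_indicator_zero]
    rw [StmtAux.mlE_vertex, StmtAux.mlE_vertex, StmtAux.mlE_vertex, StmtAux.mlE_vertex]
    have hU' : ((insert i A).erase j) ∪ (insert j (A.erase i)) = insert j (insert i A) := by
      ext a
      by_cases haj : a = j <;> by_cases hai : a = i <;>
        simp [haj, hai, hij, Ne.symm hij, Finset.mem_insert, Finset.mem_erase, Finset.mem_union] <;>
        tauto
    have hI' : ((insert i A).erase j) ∩ (insert j (A.erase i)) = (A.erase i).erase j := by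
      ext a
      by_cases haj : a = j <;> by_cases hai : a = i <;>
        simp [haj, hai, hij, Ne.symm hij, Finset.mem_insert, Finset.mem_erase, Finset.mem_inter] <;>
        tauto
    have hs := hsub ((insert i A).erase j) (insert j (A.erase i))
    rw [hU', hI'] at hs
    linarith
  have := cube_nonpos (g := g) hdec hvert h0 h1
  simp only [hg] at this
  linarith

lemma grad_update_le (hsub : ∀ A B : Finset (Fin n), f A + f B ≥ f (A ∪ B) + f (A ∩ B))
    {k j : Fin n} {x : Fin n → ℝ} (h0 : 0 ≤ x) (h1 : x ≤ 1) {t t' : ℝ} (h : t ≤ t') :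
    gradMultilinearExt f (Function.update x k t') j
      ≤ gradMultilinearExt f (Function.update x k t) j := by
  by_cases hkj : k = j
  · subst hkj
    rw [StmtAux.grad_update_self, StmtAux.grad_update_self]
  · have hexp : ∀ s : ℝ, gradMultilinearExt f (Function.update x k s) j
        = (multilinearExt f (Function.update (Function.update x j 1) k 0)
            - multilinearExt f (Function.update (Function.update x j 0) k 0))
          + s * (gradMultilinearExt f (Function.update x j 1) k
            - gradMultilinearExt f (Function.update x j 0) k) := by
      intro s
      have c1 : Function.update (Function.update x k s) j 1
          = Function.update (Function.update x j 1) k s :=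
        Function.update_comm (fun h' => hkj h') s 1 x
      have c0 : Function.update (Function.update x k s) j 0
          = Function.update (Function.update x j 0) k s :=
        Function.update_comm (fun h' => hkj h') s 0 x
      show multilinearExt f (Function.update (Function.update x k s) j 1)
          - multilinearExt f (Function.update (Function.update x k s) j 0) = _
      rw [c1, c0, StmtAux.mlE_update f (Function.update x j 1) k s,
        StmtAux.mlE_update f (Function.update x j 0) k s]
      ring
    have sl := grad_second f hsub (Ne.symm hkj) h0 h1
    have e1 := hexp t
    have e2 := hexp t'
    nlinarith [mul_nonneg (sub_nonneg.mpr h) (sub_nonneg.mpr sl)]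

lemma piecewise_cube {a b : Fin n → ℝ} (h0 : 0 ≤ a) (hab : a ≤ b) (h1 : b ≤ 1)
    (s : Finset (Fin n)) :
    (0 ≤ s.piecewise b a) ∧ (s.piecewise b a ≤ 1) ∧ a ≤ s.piecewise b a
      ∧ s.piecewise b a ≤ b := by
  refine ⟨fun i => ?_, fun i => ?_, fun i => ?_, fun i => ?_⟩ <;>
    [skip; skip; skip; skip] <;>
    by_cases h : i ∈ s <;>
      [rw [Finset.piecewise_eq_of_mem _ _ _ h]; rw [Finset.piecewise_eq_of_notMem _ _ _ h];
       rw [Finset.piecewise_eq_of_mem _ _ _ h]; rw [Finset.piecewise_eq_of_notMem _ _ _ h];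
       rw [Finset.piecewise_eq_of_mem _ _ _ h]; rw [Finset.piecewise_eq_of_notMem _ _ _ h];
       rw [Finset.piecewise_eq_of_mem _ _ _ h]; rw [Finset.piecewise_eq_of_notMem _ _ _ h]] <;>
      first
        | exact h0 i
        | exact h1 i
        | exact (h0 i).trans (hab i)
        | exact (hab i).trans (h1 i)
        | exact hab i
        | exact le_refl _

lemma grad_mono (hsub : ∀ A B : Finset (Fin n), f A + f B ≥ f (A ∪ B) + f (A ∩ B))
    (j : Fin n) {a b : Fin n → ℝ} (h0 : 0 ≤ a) (hab : a ≤ b) (h1 : b ≤ 1) :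
    gradMultilinearExt f b j ≤ gradMultilinearExt f a j := by
  have key : ∀ s : Finset (Fin n),
      gradMultilinearExt f (s.piecewise b a) j ≤ gradMultilinearExt f a j := by
    intro s
    induction s using Finset.induction with
    | empty => rw [Finset.piecewise_empty]
    | insert _ _ hk ih =>
      rename_i k s
      rw [Finset.piecewise_insert]
      have hcube := piecewise_cube h0 hab h1 s
      have h2 : gradMultilinearExt f (Function.update (s.piecewise b a) k (b k)) j
          ≤ gradMultilinearExt f (Function.update (s.piecewise b a) k (a k)) j :=
        grad_update_le f hsub hcube.1 hcube.2.1 (hab k)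
      have h3 : Function.update (s.piecewise b a) k (a k) = s.piecewise b a := by
        have : a k = s.piecewise b a k := (Finset.piecewise_eq_of_notMem _ _ _ hk).symm
        rw [this]; exact Function.update_eq_self k _
      rw [h3] at h2
      exact h2.trans ih
  have := key Finset.univ
  rwa [Finset.piecewise_univ] at this

lemma tele_pair (hsub : ∀ A B : Finset (Fin n), f A + f B ≥ f (A ∪ B) + f (A ∩ B))
    {a c z : Fin n → ℝ} (hc0 : 0 ≤ c) (hca : c ≤ a) (hz : 0 ≤ z) (h1 : a + z ≤ 1) :
    multilinearExt f (a + z) - multilinearExt f a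
      ≤ multilinearExt f (c + z) - multilinearExt f c := by
  have haz : a ≤ a + z := fun i => by have h := hz i; simp only [Pi.zero_apply] at h; simp only [Pi.add_apply]; linarith
  have hcz : c ≤ c + z := fun i => by have h := hz i; simp only [Pi.zero_apply] at h; simp only [Pi.add_apply]; linarith
  have key : ∀ s : Finset (Fin n),
      multilinearExt f (s.piecewise (a + z) a) - multilinearExt f a
        ≤ multilinearExt f (s.piecewise (c + z) c) - multilinearExt f c := by
    intro s
    induction s using Finset.induction with
    | empty => rw [Finset.piecewise_empty, Finset.piecewise_empty]; linarith
    | insert _ _ hk ih =>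
      rename_i k s
      rw [Finset.piecewise_insert, Finset.piecewise_insert]
      set u := s.piecewise (a + z) a with hu
      set w := s.piecewise (c + z) c with hw
      have hcu := piecewise_cube ((fun i => (hc0 i).trans (hca i)) : 0 ≤ a) haz h1 s
      have hcwle : w ≤ u := fun i => by
        by_cases h : i ∈ s
        · rw [hw, hu, Finset.piecewise_eq_of_mem _ _ _ h, Finset.piecewise_eq_of_mem _ _ _ h]
          have h1' := hca i
          simp only [Pi.add_apply]
          linarith
        · rw [hw, hu, Finset.piecewise_eq_of_notMem _ _ _ h,
            Finset.piecewise_eq_of_notMem _ _ _ h]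
          exact hca i
      have hcz1 : c + z ≤ 1 := fun i => by
        have h2 := hca i
        have h3 := h1 i
        simp only [Pi.add_apply, Pi.one_apply] at *
        linarith
      have hcw0 : 0 ≤ w := (piecewise_cube hc0 hcz hcz1 s).1
      have hgr : gradMultilinearExt f u k ≤ gradMultilinearExt f w k :=
        grad_mono f hsub k hcw0 hcwle hcu.2.1
      have huk : u k = a k := Finset.piecewise_eq_of_notMem _ _ _ hk
      have hwk : w k = c k := Finset.piecewise_eq_of_notMem _ _ _ hk
      have e1 : multilinearExt f (Function.update u k ((a + z) k)) - multilinearExt f u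
          = z k * gradMultilinearExt f u k := by
        rw [StmtAux.mlE_update_sub f u k ((a + z) k), huk]
        simp only [Pi.add_apply]; ring
      have e2 : multilinearExt f (Function.update w k ((c + z) k)) - multilinearExt f w
          = z k * gradMultilinearExt f w k := by
        rw [StmtAux.mlE_update_sub f w k ((c + z) k), hwk]
        simp only [Pi.add_apply]; ring
      have hmul : z k * gradMultilinearExt f u k ≤ z k * gradMultilinearExt f w k :=
        mul_le_mul_of_nonneg_left hgr (by simpa using hz k)
      linarith
  have := key Finset.univ
  rwa [Finset.piecewise_univ, Finset.piecewise_univ] at this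

lemma tele_upper (hsub : ∀ A B : Finset (Fin n), f A + f B ≥ f (A ∪ B) + f (A ∩ B))
    {a z : Fin n → ℝ} (h0 : 0 ≤ a) (hz : 0 ≤ z) (h1 : a + z ≤ 1) :
    multilinearExt f (a + z)
      ≤ multilinearExt f a + ∑ k, z k * gradMultilinearExt f a k := by
  have haz : a ≤ a + z := fun i => by have h := hz i; simp only [Pi.zero_apply] at h; simp only [Pi.add_apply]; linarith
  have key : ∀ s : Finset (Fin n),
      multilinearExt f (s.piecewise (a + z) a)
        ≤ multilinearExt f a + ∑ k ∈ s, z k * gradMultilinearExt f a k := by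
    intro s
    induction s using Finset.induction with
    | empty => rw [Finset.piecewise_empty]; simp
    | insert _ _ hk ih =>
      rename_i k s
      rw [Finset.piecewise_insert, Finset.sum_insert hk]
      set u := s.piecewise (a + z) a with hu
      have hcu := piecewise_cube h0 haz h1 s
      have huk : u k = a k := Finset.piecewise_eq_of_notMem _ _ _ hk
      have e1 : multilinearExt f (Function.update u k ((a + z) k)) - multilinearExt f u
          = z k * gradMultilinearExt f u k := by
        rw [StmtAux.mlE_update_sub f u k ((a + z) k), huk]
        simp only [Pi.add_apply]; ring
      have hgr : gradMultilinearExt f u k ≤ gradMultilinearExt f a k :=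
        grad_mono f hsub k h0 hcu.2.2.1 hcu.2.1
      have hmul : z k * gradMultilinearExt f u k ≤ z k * gradMultilinearExt f a k :=
        mul_le_mul_of_nonneg_left hgr (by simpa using hz k)
      linarith
  have := key Finset.univ
  rwa [Finset.piecewise_univ] at this

lemma tele_lower (hsub : ∀ A B : Finset (Fin n), f A + f B ≥ f (A ∪ B) + f (A ∩ B))
    {a z : Fin n → ℝ} (h0 : 0 ≤ a) (hz : 0 ≤ z) (h1 : a + z ≤ 1) :
    multilinearExt f a + ∑ k, z k * gradMultilinearExt f (a + z) k
      ≤ multilinearExt f (a + z) := by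
  have haz : a ≤ a + z := fun i => by have h := hz i; simp only [Pi.zero_apply] at h; simp only [Pi.add_apply]; linarith
  have key : ∀ s : Finset (Fin n),
      multilinearExt f a + ∑ k ∈ s, z k * gradMultilinearExt f (a + z) k
        ≤ multilinearExt f (s.piecewise (a + z) a) := by
    intro s
    induction s using Finset.induction with
    | empty => rw [Finset.piecewise_empty]; simp
    | insert _ _ hk ih =>
      rename_i k s
      rw [Finset.piecewise_insert, Finset.sum_insert hk]
      set u := s.piecewise (a + z) a with hu
      have hcu := piecewise_cube h0 haz h1 s
      have huk : u k = a k := Finset.piecewise_eq_of_notMem _ _ _ hk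
      have e1 : multilinearExt f (Function.update u k ((a + z) k)) - multilinearExt f u
          = z k * gradMultilinearExt f u k := by
        rw [StmtAux.mlE_update_sub f u k ((a + z) k), huk]
        simp only [Pi.add_apply]; ring
      have hgr : gradMultilinearExt f (a + z) k ≤ gradMultilinearExt f u k :=
        grad_mono f hsub k hcu.1 hcu.2.2.2 h1
      have hmul : z k * gradMultilinearExt f (a + z) k ≤ z k * gradMultilinearExt f u k :=
        mul_le_mul_of_nonneg_left hgr (by simpa using hz k)
      linarith
  have := key Finset.univ
  rwa [Finset.piecewise_univ] at this

lemma mlE_diff_le (hsub : ∀ A B : Finset (Fin n), f A + f B ≥ f (A ∪ B) + f (A ∩ B))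
    {a b : Fin n → ℝ} (h0 : 0 ≤ a) (hab : a ≤ b) (h1 : b ≤ 1) :
    |multilinearExt f b - multilinearExt f a|
      ≤ (2 * ∑ S : Finset (Fin n), |f S|) * ∑ k, (b k - a k) := by
  set B := 2 * ∑ S : Finset (Fin n), |f S| with hB
  have hB0 : 0 ≤ B := by
    rw [hB]
    have : (0:ℝ) ≤ ∑ S : Finset (Fin n), |f S| :=
      Finset.sum_nonneg fun S _ => abs_nonneg _
    linarith
  set z := b - a with hz
  have hz0 : 0 ≤ z := fun i => by simpa [hz] using hab i
  have hbz : a + z = b := by funext i; simp [hz]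
  have h1' : a + z ≤ 1 := by rw [hbz]; exact h1
  have hupper := tele_upper f hsub h0 hz0 h1'
  have hlower := tele_lower f hsub h0 hz0 h1'
  rw [hbz] at hupper hlower
  have hub : ∀ x' : Fin n → ℝ, 0 ≤ x' → x' ≤ 1 → ∀ k,
      |gradMultilinearExt f x' k| ≤ B := fun x' hx0 hx1 k =>
    StmtAux.abs_grad_le f hx0 hx1 k
  have hsum_up : ∑ k, z k * gradMultilinearExt f a k ≤ ∑ k, z k * B := by
    refine Finset.sum_le_sum fun k _ => ?_
    have := (abs_le.mp (hub a h0 (fun i => (hab i).trans (h1 i)) k)).2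
    exact mul_le_mul_of_nonneg_left this (by simpa using hz0 k)
  have hsum_lo : ∑ k, z k * (-B) ≤ ∑ k, z k * gradMultilinearExt f b k := by
    refine Finset.sum_le_sum fun k _ => ?_
    have := (abs_le.mp (hub b (fun i => (h0 i).trans (hab i)) h1 k)).1
    exact mul_le_mul_of_nonneg_left this (by simpa using hz0 k)
  have e : ∑ k, z k * B = B * ∑ k, (b k - a k) := by
    rw [Finset.mul_sum]
    refine Finset.sum_congr rfl fun k _ => ?_
    simp [hz]; ring
  have e2 : ∑ k, z k * (-B) = -(B * ∑ k, (b k - a k)) := by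
    calc ∑ k, z k * (-B) = ∑ k, -(z k * B) := Finset.sum_congr rfl fun k _ => by ring
      _ = -∑ k, z k * B := by rw [← Finset.sum_neg_distrib]
      _ = -(B * ∑ k, (b k - a k)) := by rw [e]
  rw [abs_le]
  constructor <;> nlinarith [hupper, hlower, hsum_up, hsum_lo, e, e2]

lemma grad_diff_le (hsub : ∀ A B : Finset (Fin n), f A + f B ≥ f (A ∪ B) + f (A ∩ B))
    {a b : Fin n → ℝ} (h0 : 0 ≤ a) (hab : a ≤ b) (h1 : b ≤ 1) (j : Fin n) :
    gradMultilinearExt f a j - gradMultilinearExt f b j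
      ≤ 2 * ((2 * ∑ S : Finset (Fin n), |f S|) * ∑ k, (b k - a k)) := by
  set M := (2 * ∑ S : Finset (Fin n), |f S|) with hMdef
  have hM0 : 0 ≤ M := by
    have : (0:ℝ) ≤ ∑ S : Finset (Fin n), |f S| :=
      Finset.sum_nonneg fun S _ => abs_nonneg _
    rw [hMdef]; linarith
  have ha1 : a ≤ 1 := fun i => (hab i).trans (h1 i)
  have hb0 : 0 ≤ b := fun i => (h0 i).trans (hab i)
  have key : ∀ t : ℝ, 0 ≤ t → t ≤ 1 →
      |multilinearExt f (Function.update b j t) - multilinearExt f (Function.update a j t)|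
        ≤ M * ∑ k, (b k - a k) := by
    intro t ht0 ht1
    have ua := StmtAux.cube_update h0 ha1 j ht0 ht1
    have ub := StmtAux.cube_update hb0 h1 j ht0 ht1
    have hord : Function.update a j t ≤ Function.update b j t := fun i => by
      by_cases h : i = j
      · subst h; simp
      · simp only [Function.update_of_ne h]; exact hab i
    have hd := mlE_diff_le f hsub ua.1 hord ub.2
    refine hd.trans ?_
    refine mul_le_mul_of_nonneg_left ?_ hM0
    refine Finset.sum_le_sum fun k _ => ?_
    by_cases h : k = j
    · subst h; simp; linarith [hab k]
    · simp only [Function.update_of_ne h]; exact le_refl _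
  have k1 := key 1 zero_le_one le_rfl
  have k0 := key 0 le_rfl zero_le_one
  unfold gradMultilinearExt
  have a1 := (abs_le.mp k1).1
  have a0 := (abs_le.mp k0).2
  linarith [abs_le.mp k1, abs_le.mp k0]

end StmtAux2
open Finset MeasureTheory

lemma yone_mem {n : ℕ} (P : Set (Fin n → ℝ))
    (hPsub : P ⊆ Set.Icc (0 : Fin n → ℝ) 1)
    (hPconv : Convex ℝ P) (hPcomp : IsCompact P)
    (v : ℝ → Fin n → ℝ)
    (hvInt : ∀ i, IntervalIntegrable (fun τ => v τ i) MeasureTheory.volume 0 1)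
    (hvP : ∀ τ ∈ Set.Icc (0 : ℝ) 1, v τ ∈ P)
    (y : ℝ → Fin n → ℝ)
    (hy : ∀ t i, y t i = ∫ τ in (0 : ℝ)..t, v τ i) : y 1 ∈ P := by
  set μ := MeasureTheory.volume.restrict (Set.Ioc (0:ℝ) 1) with hμdef
  haveI : IsProbabilityMeasure μ := by
    constructor
    rw [hμdef, Measure.restrict_apply_univ, Real.volume_Ioc]
    norm_num
  have hii : ∀ i, MeasureTheory.Integrable (fun τ => v τ i) μ := fun i => by
    have h := hvInt i
    rw [intervalIntegrable_iff_integrableOn_Ioc_of_le zero_le_one] at h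
    exact h
  have hmeas : AEStronglyMeasurable v μ := by
    have h' := fun i => (hii i).aestronglyMeasurable.aemeasurable
    choose g hg hge using h'
    have hm : Measurable (fun τ i => g i τ) := measurable_pi_iff.mpr fun i => hg i
    have hae : v =ᵐ[μ] fun τ i => g i τ := by
      have := (ae_all_iff (p := fun τ i => v τ i = g i τ)).mpr hge
      filter_upwards [this] with τ hτ
      exact funext hτ
    exact (hm.aemeasurable.congr hae.symm).aestronglyMeasurable
  have hbound : ∀ᵐ τ ∂μ, ‖v τ‖ ≤ 1 := by
    rw [hμdef, MeasureTheory.ae_restrict_iff' measurableSet_Ioc]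
    refine MeasureTheory.ae_of_all _ fun τ hτ => ?_
    rw [pi_norm_le_iff_of_nonneg zero_le_one]
    intro i
    have hm := hPsub (hvP τ ⟨hτ.1.le, hτ.2⟩)
    have h1 : (0:ℝ) ≤ v τ i := by simpa using hm.1 i
    have h2 : v τ i ≤ 1 := by simpa using hm.2 i
    rw [Real.norm_eq_abs, abs_le]
    exact ⟨by linarith, h2⟩
  have hint : Integrable v μ := Integrable.mono' (integrable_const 1) hmeas hbound
  have hmem : ∀ᵐ τ ∂μ, v τ ∈ P := by
    rw [hμdef, MeasureTheory.ae_restrict_iff' measurableSet_Ioc]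
    exact MeasureTheory.ae_of_all _ fun τ hτ => hvP τ ⟨hτ.1.le, hτ.2⟩
  have hI := hPconv.integral_mem hPcomp.isClosed hmem hint
  have hrepr : y 1 = ∫ τ, v τ ∂μ := by
    funext i
    rw [hy]
    rw [intervalIntegral.integral_of_le zero_le_one]
    have hcomm := (ContinuousLinearMap.proj (R := ℝ) (φ := fun _ : Fin n => ℝ) i).integral_comp_comm hint
    simpa using hcomm
  rwa [hrepr]

open StmtAux StmtAux2 MeasureTheory

/-- continuous greedy process for non-monotone functions.
Let `f` be nonnegative submodular with multilinear extension `F`, let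
`P ⊆ [0,1]ⁿ` be convex, compact and down-monotone, and let
`y(t) = ∫₀ᵗ v(τ) dτ` be the greedy trajectory, where `v(τ) ∈ P` maximizes
`w ↦ w · ∇F(y(τ))` over `w ∈ P`. With
`F_DMAX = max_{0 ≤ t ≤ 1} F(y(1) − y(t))`, we have `y(1) ∈ P` and, for every
`x ∈ P`, `F(y(1)) ≥ (1 − e^{−1})·(F(x ∨ y(1)) − F_DMAX)`. -/
theorem stmt_12 {n : ℕ} (f : Finset (Fin n) → ℝ)
    (hsub : ∀ A B : Finset (Fin n), f A + f B ≥ f (A ∪ B) + f (A ∩ B))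
    (hnonneg : ∀ A : Finset (Fin n), 0 ≤ f A)
    (P : Set (Fin n → ℝ))
    (hPsub : P ⊆ Set.Icc (0 : Fin n → ℝ) 1)
    (hPconv : Convex ℝ P) (hPcomp : IsCompact P)
    (hPdown : ∀ x y : Fin n → ℝ, 0 ≤ x → x ≤ y → y ∈ P → x ∈ P)
    (v : ℝ → Fin n → ℝ)
    (hvInt : ∀ i, IntervalIntegrable (fun τ => v τ i) MeasureTheory.volume 0 1)
    (hvP : ∀ τ ∈ Set.Icc (0 : ℝ) 1, v τ ∈ P)
    (y : ℝ → Fin n → ℝ)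
    (hy : ∀ t i, y t i = ∫ τ in (0 : ℝ)..t, v τ i)
    (hgreedy : ∀ τ ∈ Set.Icc (0 : ℝ) 1, ∀ w ∈ P,
      ∑ j, w j * gradMultilinearExt f (y τ) j ≤
        ∑ j, v τ j * gradMultilinearExt f (y τ) j)
    (FDMAX : ℝ)
    (hFDMAX : IsGreatest
      ((fun t => multilinearExt f (y 1 - y t)) '' Set.Icc (0 : ℝ) 1) FDMAX) :
    y 1 ∈ P ∧ ∀ x ∈ P,
      multilinearExt f (y 1) ≥
        (1 - Real.exp (-1)) *
          (multilinearExt f (fun i => max (x i) (y 1 i)) - FDMAX) := by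
  classical
  refine ⟨yone_mem P hPsub hPconv hPcomp v hvInt hvP y hy, ?_⟩
  intro x hx
  -- basic pointwise facts
  have hv01 : ∀ τ ∈ Set.Icc (0:ℝ) 1, ∀ i, 0 ≤ v τ i ∧ v τ i ≤ 1 := by
    intro τ hτ i
    have h := hPsub (hvP τ hτ)
    exact ⟨by simpa using h.1 i, by simpa using h.2 i⟩
  have hvii : ∀ s t : ℝ, 0 ≤ s → s ≤ t → t ≤ 1 →
      ∀ i, IntervalIntegrable (fun τ => v τ i) MeasureTheory.volume s t := by
    intro s t hs hst ht i
    refine (hvInt i).mono_set ?_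
    rw [Set.uIcc_of_le hst, Set.uIcc_of_le zero_le_one]
    exact Set.Icc_subset_Icc hs ht
  have hydiff : ∀ s t : ℝ, 0 ≤ s → s ≤ t → t ≤ 1 →
      ∀ i, y t i - y s i = ∫ τ in s..t, v τ i := by
    intro s t hs hst ht i
    rw [hy, hy]
    exact intervalIntegral.integral_interval_sub_left
      (hvii 0 t le_rfl (hs.trans hst) ht i) (hvii 0 s le_rfl hs (hst.trans ht) i)
  have hinc : ∀ s t : ℝ, 0 ≤ s → s ≤ t → t ≤ 1 →
      ∀ i, 0 ≤ y t i - y s i ∧ y t i - y s i ≤ t - s := by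
    intro s t hs hst ht i
    rw [hydiff s t hs hst ht i]
    constructor
    · exact intervalIntegral.integral_nonneg hst
        (fun u hu => (hv01 u ⟨hs.trans hu.1, hu.2.trans ht⟩ i).1)
    · have hmono := intervalIntegral.integral_mono_on hst (hvii s t hs hst ht i)
        (intervalIntegrable_const (c := (1:ℝ)))
        (fun u hu => (hv01 u ⟨hs.trans hu.1, hu.2.trans ht⟩ i).2)
      simpa using hmono
  have hy0 : ∀ i, y 0 i = 0 := fun i => by rw [hy]; simp
  have hycube : ∀ t : ℝ, 0 ≤ t → t ≤ 1 → 0 ≤ y t ∧ y t ≤ 1 := by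
    intro t h0t ht1
    constructor <;> intro i
    · have h := (hinc 0 t le_rfl h0t ht1 i).1
      rw [hy0 i] at h
      simpa using h
    · have h := (hinc 0 t le_rfl h0t ht1 i).2
      rw [hy0 i] at h
      have : y t i ≤ t := by linarith
      simpa using this.trans ht1
  have hymono : ∀ s t : ℝ, 0 ≤ s → s ≤ t → t ≤ 1 → y s ≤ y t :=
    fun s t hs hst ht i => by linarith [(hinc s t hs hst ht i).1]
  have hx0 : (0 : Fin n → ℝ) ≤ x := (hPsub hx).1
  have hx1 : x ≤ 1 := (hPsub hx).2
  set M : ℝ := ∑ S : Finset (Fin n), |f S| with hMdef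
  set B : ℝ := 2 * M with hBdef
  have hM0 : 0 ≤ M := Finset.sum_nonneg fun S _ => abs_nonneg _
  have hB0 : 0 ≤ B := by rw [hBdef]; linarith
  set Λ : ℝ := multilinearExt f (fun i => max (x i) (y 1 i)) - FDMAX with hΛdef
  set K : ℝ := B * n + 2 * B * n^2 with hKdef
  -- Lemma B : the value along the shifted trajectory
  have hLB : ∀ τ : ℝ, 0 ≤ τ → τ ≤ 1 →
      Λ ≤ multilinearExt f (fun i => max (x i) (y τ i)) := by
    intro τ h0τ hτ1
    set a : Fin n → ℝ := fun i => max (x i) (y τ i) with hadef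
    set z : Fin n → ℝ := fun i => max (x i) (y 1 i) - max (x i) (y τ i) with hzdef
    set c : Fin n → ℝ := fun i => (y 1 i - y τ i) - z i with hcdef
    have hyc := hycube τ h0τ hτ1
    have hyc1 := hycube 1 zero_le_one le_rfl
    have hyτ1 : ∀ i, y τ i ≤ y 1 i := fun i => hymono τ 1 h0τ hτ1 le_rfl i
    have hz0 : (0 : Fin n → ℝ) ≤ z := fun i => by
      have := hyτ1 i
      simp only [hzdef, Pi.zero_apply]
      have : max (x i) (y τ i) ≤ max (x i) (y 1 i) := max_le_max le_rfl (hyτ1 i)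
      linarith
    have hzle : ∀ i, z i ≤ y 1 i - y τ i := by
      intro i
      simp only [hzdef]
      have h1 : x i ≤ max (x i) (y τ i) + (y 1 i - y τ i) := by
        have := le_max_left (x i) (y τ i)
        have := hyτ1 i
        linarith
      have h2 : y 1 i ≤ max (x i) (y τ i) + (y 1 i - y τ i) := by
        have := le_max_right (x i) (y τ i)
        linarith
      have := max_le h1 h2
      linarith
    have hc0 : (0 : Fin n → ℝ) ≤ c := fun i => by
      have := hzle i
      simp only [hcdef, Pi.zero_apply]
      linarith
    have hca : c ≤ a := fun i => by
      have h1 : y 1 i ≤ max (x i) (y 1 i) := le_max_right _ _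
      have h2 : (0:ℝ) ≤ y τ i := by simpa using hyc.1 i
      simp only [hcdef, hadef, hzdef]
      linarith
    have haz1 : a + z ≤ 1 := fun i => by
      have h1 : x i ≤ 1 := by simpa using hx1 i
      have h2 : y 1 i ≤ 1 := by simpa using hyc1.2 i
      simp only [hadef, hzdef, Pi.add_apply, Pi.one_apply]
      have := max_le h1 h2
      linarith
    have hpair := tele_pair f hsub hc0 hca hz0 haz1
    have eaz : a + z = fun i => max (x i) (y 1 i) := by
      funext i; simp only [hadef, hzdef, Pi.add_apply]; ring
    have ecz : c + z = y 1 - y τ := by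
      funext i; simp only [hcdef, Pi.add_apply, Pi.sub_apply]; ring
    rw [eaz, ecz] at hpair
    have hFD : multilinearExt f (y 1 - y τ) ≤ FDMAX := hFDMAX.2 ⟨τ, ⟨h0τ, hτ1⟩, rfl⟩
    have hc1 : c ≤ 1 := fun i => by
      have h1 := hca i
      have h2 : a i ≤ (a + z) i := by
        simp only [Pi.add_apply]
        have := hz0 i
        simp only [Pi.zero_apply] at this
        linarith
      exact h1.trans (h2.trans (haz1 i))
    have hcnn : 0 ≤ multilinearExt f c := mlE_nonneg f hnonneg hc0 hc1
    rw [hΛdef]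
    linarith
  -- greedy pointwise inequality
  have hkey : ∀ τ : ℝ, 0 ≤ τ → τ ≤ 1 →
      Λ - multilinearExt f (y τ) ≤ ∑ j, v τ j * gradMultilinearExt f (y τ) j := by
    intro τ h0τ hτ1
    have hyc := hycube τ h0τ hτ1
    set w : Fin n → ℝ := fun i => max (x i) (y τ i) - y τ i with hwdef
    have hw0 : (0 : Fin n → ℝ) ≤ w := fun i => by
      simp only [hwdef, Pi.zero_apply]
      have := le_max_right (x i) (y τ i)
      linarith
    have hwx : w ≤ x := fun i => by
      simp only [hwdef]
      have h1 : (0:ℝ) ≤ y τ i := by simpa using hyc.1 i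
      have h2 : x i ≤ x i + y τ i := by linarith
      have h3 : y τ i ≤ x i + y τ i := by
        have := hx0 i
        simp only [Pi.zero_apply] at this
        linarith
      have := max_le h2 h3
      linarith
    have hwP : w ∈ P := hPdown w x hw0 hwx hx
    have hgr := hgreedy τ ⟨h0τ, hτ1⟩ w hwP
    have hyw1 : y τ + w ≤ 1 := fun i => by
      simp only [hwdef, Pi.add_apply, Pi.one_apply]
      have h1 : x i ≤ 1 := by simpa using hx1 i
      have h2 : y τ i ≤ 1 := by simpa using hyc.2 i
      have := max_le h1 h2
      linarith
    have hup := tele_upper f hsub hyc.1 hw0 hyw1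
    have eyw : y τ + w = fun i => max (x i) (y τ i) := by
      funext i; simp only [hwdef, Pi.add_apply]; ring
    rw [eyw] at hup
    have := hLB τ h0τ hτ1
    linarith
  -- the one-step inequality of the discretized greedy process
  have step : ∀ N : ℕ, 1 ≤ N → ∀ k : ℕ, k < N →
      multilinearExt f (y ((k:ℝ)/(N:ℝ))) + (1/(N:ℝ)) * Λ - K * (1/(N:ℝ))^2
        ≤ (1 + 1/(N:ℝ)) * multilinearExt f (y (((k:ℝ)+1)/(N:ℝ))) := by
    intro N hN k hk
    have hN0 : (0:ℝ) < N := by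
      have : (1:ℝ) ≤ N := by exact_mod_cast hN
      linarith
    set δ : ℝ := 1/(N:ℝ) with hδdef
    set s : ℝ := (k:ℝ)/(N:ℝ) with hsdef
    set t : ℝ := ((k:ℝ)+1)/(N:ℝ) with htdef
    have hδ0 : 0 < δ := by positivity
    have hs0 : 0 ≤ s := by positivity
    have hst : s ≤ t := by
      rw [hsdef, htdef]
      gcongr
      linarith
    have hts : t - s = δ := by
      rw [hsdef, htdef, hδdef, div_sub_div_same]
      ring_nf
    have hk1N : (k:ℝ) + 1 ≤ (N:ℝ) := by
      have := Nat.succ_le_of_lt hk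
      exact_mod_cast this
    have ht1 : t ≤ 1 := by rw [htdef, div_le_one hN0]; exact hk1N
    have hcs := hycube s hs0 (hst.trans ht1)
    have hct := hycube t (hs0.trans hst) ht1
    set Y : Fin n → ℝ := y t with hYdef
    set a1 : ℝ := multilinearExt f Y with ha1def
    set z : Fin n → ℝ := Y - y s with hzdef
    have hz0 : (0 : Fin n → ℝ) ≤ z := fun i => by
      have := (hinc s t hs0 hst ht1 i).1
      simp only [hzdef, Pi.sub_apply, Pi.zero_apply]
      linarith
    have hYz : y s + z = Y := by rw [hzdef]; abel
    have h1' : y s + z ≤ 1 := by rw [hYz]; exact hct.2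
    have hlow := tele_lower f hsub hcs.1 hz0 h1'
    rw [hYz] at hlow
    have hGint : ∀ j, IntervalIntegrable
        (fun τ => v τ j * gradMultilinearExt f Y j) MeasureTheory.volume s t :=
      fun j => (hvii s t hs0 hst ht1 j).mul_const _
    have hIsum : ∑ j, z j * gradMultilinearExt f Y j
        = ∫ τ in s..t, ∑ j, v τ j * gradMultilinearExt f Y j := by
      rw [intervalIntegral.integral_finset_sum (fun j _ => hGint j)]
      refine Finset.sum_congr rfl fun j _ => ?_
      rw [intervalIntegral.integral_mul_const]
      congr 1
      rw [hzdef]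
      simp only [Pi.sub_apply]
      exact hydiff s t hs0 hst ht1 j
    have hpt : ∀ τ ∈ Set.Icc s t, Λ - a1 - K * δ
        ≤ ∑ j, v τ j * gradMultilinearExt f Y j := by
      intro τ hτ
      have h0τ : 0 ≤ τ := hs0.trans hτ.1
      have hτ1 : τ ≤ 1 := hτ.2.trans ht1
      have hycτ := hycube τ h0τ hτ1
      have hyτY : y τ ≤ Y := hymono τ t h0τ hτ.2 ht1
      have hSig : ∑ i, (Y i - y τ i) ≤ (n:ℝ) * δ := by
        have hb : ∀ i ∈ Finset.univ, Y i - y τ i ≤ δ := fun i _ => by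
          have h2 := (hinc τ t h0τ hτ.2 ht1 i).2
          have h3 : t - τ ≤ δ := by rw [← hts]; linarith [hτ.1]
          linarith
        calc ∑ i, (Y i - y τ i) ≤ ∑ _i : Fin n, δ := Finset.sum_le_sum hb
          _ = (n:ℝ) * δ := by
            rw [Finset.sum_const, Finset.card_univ, Fintype.card_fin]
            simp [nsmul_eq_mul]
      have hkeyτ := hkey τ h0τ hτ1
      have hlip := mlE_diff_le f hsub hycτ.1 hyτY hct.2
      rw [← hMdef, ← hBdef] at hlip
      have hSigB : B * ∑ i, (Y i - y τ i) ≤ B * ((n:ℝ)*δ) :=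
        mul_le_mul_of_nonneg_left hSig hB0
      have hgτ : multilinearExt f (y τ) ≤ a1 + B * ((n:ℝ) * δ) := by
        have h1 := (abs_le.mp hlip).1
        rw [ha1def]
        linarith
      have hgd : ∀ j, gradMultilinearExt f (y τ) j - gradMultilinearExt f Y j
          ≤ 2 * (B * ((n:ℝ) * δ)) := by
        intro j
        have hgdl := grad_diff_le f hsub hycτ.1 hyτY hct.2 j
        rw [← hMdef, ← hBdef] at hgdl
        linarith
      have hvsum : ∑ j, v τ j * gradMultilinearExt f (y τ) j
          ≤ (∑ j, v τ j * gradMultilinearExt f Y j)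
            + ∑ _j : Fin n, 2 * (B * ((n:ℝ)*δ)) := by
        rw [← Finset.sum_add_distrib]
        refine Finset.sum_le_sum fun j _ => ?_
        have hv := hv01 τ ⟨h0τ, hτ1⟩ j
        have hmono := grad_mono f hsub j hycτ.1 hyτY hct.2
        have hgdj := hgd j
        nlinarith [hv.1, hv.2, hmono, hgdj]
      have hcval : (∑ _j : Fin n, 2 * (B * ((n:ℝ) * δ))) = (n:ℝ) * (2 * (B * ((n:ℝ) * δ))) := by
        rw [Finset.sum_const, Finset.card_univ, Fintype.card_fin]
        simp [nsmul_eq_mul]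
      have hKδ : K * δ = B*((n:ℝ)*δ) + (n:ℝ)*(2*(B*((n:ℝ)*δ))) := by rw [hKdef]; ring
      rw [hcval] at hvsum
      linarith
    have hGsum : IntervalIntegrable (fun τ => ∑ j, v τ j * gradMultilinearExt f Y j)
        MeasureTheory.volume s t := by
      have hs' := IntervalIntegrable.sum Finset.univ (fun j _ => hGint j)
      have : (∑ j : Fin n, fun τ => v τ j * gradMultilinearExt f Y j)
          = fun τ => ∑ j, v τ j * gradMultilinearExt f Y j := by
        funext τ
        simp [Finset.sum_apply]
      rwa [this] at hs'
    have hintineq := intervalIntegral.integral_mono_on hst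
      (intervalIntegrable_const (c := Λ - a1 - K * δ)) hGsum hpt
    rw [intervalIntegral.integral_const, smul_eq_mul, hts] at hintineq
    have hexp : δ * (Λ - a1 - K*δ) = δ*Λ - δ*a1 - K*δ^2 := by ring
    rw [← hIsum] at hintineq
    linarith
  -- the discrete recursion
  have recb : ∀ N : ℕ, 1 ≤ N → ∀ k : ℕ, k ≤ N →
      (1 - ((1 + 1/(N:ℝ))⁻¹)^k) * (Λ - K * (1/(N:ℝ)))
        ≤ multilinearExt f (y ((k:ℝ)/(N:ℝ))) := by
    intro N hN
    have hN0 : (0:ℝ) < N := by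
      have : (1:ℝ) ≤ N := by exact_mod_cast hN
      linarith
    set δ : ℝ := 1/(N:ℝ) with hδdef
    have hδ0 : 0 < δ := by positivity
    set ρ : ℝ := (1 + δ)⁻¹ with hρdef
    have h1δ : (0:ℝ) < 1 + δ := by linarith
    have hρmul : (1 + δ) * ρ = 1 := mul_inv_cancel₀ (ne_of_gt h1δ)
    intro k
    induction k with
    | zero =>
      intro _
      have hc := hycube 0 le_rfl zero_le_one
      have hnn : 0 ≤ multilinearExt f (y (((0:ℕ):ℝ)/(N:ℝ))) := by
        rw [show (((0:ℕ):ℝ)/(N:ℝ)) = (0:ℝ) by simp]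
        exact mlE_nonneg f hnonneg hc.1 hc.2
      simpa using hnn
    | succ k ih =>
      intro hk1
      have hkN : k < N := Nat.lt_of_succ_le hk1
      have hstep := step N hN k hkN
      have hih := ih (Nat.le_of_lt hkN)
      have hpow : (1 + δ) * ρ^(k+1) = ρ^k := by
        calc (1 + δ) * ρ^(k+1) = ((1 + δ) * ρ) * ρ^k := by rw [pow_succ]; ring
          _ = ρ^k := by rw [hρmul]; ring
      have e : (1 + δ) * ((1 - ρ^(k+1)) * (Λ - K*δ))
          = ((1 - ρ^k) * (Λ - K*δ)) + (δ*Λ - K*δ^2) := by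
        linear_combination (K*δ - Λ) * hpow
      have hcast : (((k+1:ℕ)):ℝ) = (k:ℝ) + 1 := by push_cast; ring
      have final : (1 + δ) * ((1 - ρ^(k+1)) * (Λ - K*δ))
          ≤ (1 + δ) * multilinearExt f (y (((k:ℝ)+1)/(N:ℝ))) := by
        rw [e]
        have : δ*Λ - K*δ^2 = (1/(N:ℝ)) * Λ - K * (1/(N:ℝ))^2 := by rw [hδdef]
        linarith
      rw [hcast]
      exact le_of_mul_le_mul_left final h1δ
  have bound : ∀ N : ℕ, 1 ≤ N →
      (1 - ((1 + 1/(N:ℝ))⁻¹)^N) * (Λ - K * (1/(N:ℝ))) ≤ multilinearExt f (y 1) := by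
    intro N hN
    have hN0 : (0:ℝ) < N := by
      have : (1:ℝ) ≤ N := by exact_mod_cast hN
      linarith
    have := recb N hN N le_rfl
    rwa [div_self (ne_of_gt hN0)] at this
  -- pass to the limit
  have hlim : Filter.Tendsto
      (fun N : ℕ => (1 - ((1 + 1/(N:ℝ))⁻¹)^N) * (Λ - K * (1/(N:ℝ))))
      Filter.atTop (nhds ((1 - Real.exp (-1)) * Λ)) := by
    have h1 : Filter.Tendsto (fun N : ℕ => ((1 + 1/(N:ℝ))^N))
        Filter.atTop (nhds (Real.exp 1)) := by
      exact Real.tendsto_one_add_div_pow_exp 1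
    have h2 : Filter.Tendsto (fun N : ℕ => ((1 + 1/(N:ℝ))^N)⁻¹)
        Filter.atTop (nhds ((Real.exp 1)⁻¹)) := h1.inv₀ (Real.exp_ne_zero 1)
    have h3 : Filter.Tendsto (fun N : ℕ => 1 - ((1 + 1/(N:ℝ))^N)⁻¹)
        Filter.atTop (nhds (1 - (Real.exp 1)⁻¹)) := tendsto_const_nhds.sub h2
    have h4 : Filter.Tendsto (fun N : ℕ => Λ - K * (1/(N:ℝ)))
        Filter.atTop (nhds (Λ - 0)) := by
      refine tendsto_const_nhds.sub ?_
      have := tendsto_const_div_atTop_nhds_zero_nat K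
      have he : (fun N : ℕ => K * (1/(N:ℝ))) = fun N : ℕ => K / (N:ℝ) := by
        funext N; ring
      rw [he]
      exact this
    have h5 := h3.mul h4
    have he2 : (fun N : ℕ => (1 - ((1 + 1/(N:ℝ))⁻¹)^N) * (Λ - K * (1/(N:ℝ))))
        = fun N : ℕ => (1 - ((1 + 1/(N:ℝ))^N)⁻¹) * (Λ - K * (1/(N:ℝ))) := by
      funext N; rw [inv_pow]
    rw [he2]
    have he3 : (1 - Real.exp (-1)) * Λ = (1 - (Real.exp 1)⁻¹) * (Λ - 0) := by
      rw [Real.exp_neg]; ring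
    rw [he3]
    exact h5
  have hfin : (1 - Real.exp (-1)) * Λ ≤ multilinearExt f (y 1) := by
    refine le_of_tendsto hlim ?_
    rw [Filter.eventually_atTop]
    exact ⟨1, fun N hN => bound N hN⟩
  exact hfin
end

section
/- Let f be a nonnegative submodular function on the ground set {1,…,n} (n ≥ 1) with multilinear extension F, and let f_max = max_{1 ≤ i ≤ n} f({i}). Let x, z ∈ [0,1]^n with z ≤ x componentwise and x_i − z_i ≤ δ for all i, where δ ≥ 0. Then F(x) − F(z) ≤ n·δ·f_max. -/
open Finset

lemma mle_update {n : ℕ} (f : Finset (Fin n) → ℝ) (w : Fin n → ℝ) (i : Fin n) (a : ℝ) :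
    (∑ S : Finset (Fin n), f S * ((∏ j ∈ S, Function.update w i a j) *
        ∏ j ∈ Sᶜ, (1 - Function.update w i a j)))
      = ∑ S ∈ (univ.erase i).powerset,
          ((1 - a) * f S + a * f (insert i S)) *
            ((∏ j ∈ S, w j) * ∏ j ∈ (univ.erase i) \ S, (1 - w j)) := by
  have hins : insert i (univ.erase i) = (univ : Finset (Fin n)) :=
    insert_erase (mem_univ i)
  have h1 : (∑ S : Finset (Fin n), f S * ((∏ j ∈ S, Function.update w i a j) *
        ∏ j ∈ Sᶜ, (1 - Function.update w i a j)))
      = ∑ S ∈ (insert i (univ.erase i)).powerset, f S * ((∏ j ∈ S, Function.update w i a j) *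
        ∏ j ∈ Sᶜ, (1 - Function.update w i a j)) := by
    rw [hins, Finset.powerset_univ]
  rw [h1, Finset.sum_powerset_insert (notMem_erase i univ), ← Finset.sum_add_distrib]
  apply Finset.sum_congr rfl
  intro S hS
  rw [Finset.mem_powerset] at hS
  have hiS : i ∉ S := fun h => (notMem_erase i univ) (hS h)
  have hcompl : Sᶜ = insert i ((univ.erase i) \ S) := by
    ext j
    simp only [Finset.mem_compl, Finset.mem_insert, Finset.mem_sdiff, Finset.mem_erase,
      Finset.mem_univ, and_true, true_and]
    constructor
    · intro h; by_cases hj : j = i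
      · exact Or.inl hj
      · exact Or.inr ⟨hj, h⟩
    · rintro (rfl | ⟨_, h⟩)
      · exact hiS
      · exact h
  have hcompl2 : (insert i S)ᶜ = (univ.erase i) \ S := by
    ext j
    simp only [Finset.mem_compl, Finset.mem_insert, Finset.mem_sdiff, Finset.mem_erase,
      Finset.mem_univ, and_true, true_and, not_or]
  have hidiff : i ∉ (univ.erase i) \ S := fun h => (notMem_erase i univ) (mem_sdiff.mp h).1
  have hprodS : ∏ j ∈ S, Function.update w i a j = ∏ j ∈ S, w j :=
    Finset.prod_congr rfl fun j hj => Function.update_of_ne (by rintro rfl; exact hiS hj) _ _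
  have hproddiff : ∏ j ∈ (univ.erase i) \ S, (1 - Function.update w i a j)
      = ∏ j ∈ (univ.erase i) \ S, (1 - w j) :=
    Finset.prod_congr rfl fun j hj => by
      rw [Function.update_of_ne (by rintro rfl; exact hidiff hj)]
  rw [hcompl, Finset.prod_insert hidiff, Function.update_self, hproddiff, hprodS,
    hcompl2, Finset.prod_insert hiS, Function.update_self, hprodS, hproddiff]
  ring

lemma mle_update_sub {n : ℕ} (f : Finset (Fin n) → ℝ) (w : Fin n → ℝ) (i : Fin n) (a b : ℝ) :
    multilinearExt f (Function.update w i a) - multilinearExt f (Function.update w i b)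
      = (a - b) * ∑ S ∈ (univ.erase i).powerset,
          (f (insert i S) - f S) *
            ((∏ j ∈ S, w j) * ∏ j ∈ (univ.erase i) \ S, (1 - w j)) := by
  unfold multilinearExt
  rw [mle_update, mle_update, ← Finset.sum_sub_distrib, Finset.mul_sum]
  exact Finset.sum_congr rfl fun S _ => by ring

lemma slope_le {n : ℕ} (f : Finset (Fin n) → ℝ)
    (hsub : ∀ A B : Finset (Fin n), f A + f B ≥ f (A ∪ B) + f (A ∩ B))
    (hnonneg : ∀ A : Finset (Fin n), 0 ≤ f A)
    (fmax : ℝ) (hfmax : ∀ i : Fin n, f {i} ≤ fmax)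
    (w : Fin n → ℝ) (hw : ∀ j, w j ∈ Set.Icc (0:ℝ) 1) (i : Fin n) :
    ∑ S ∈ (univ.erase i).powerset, (f (insert i S) - f S) *
        ((∏ j ∈ S, w j) * ∏ j ∈ (univ.erase i) \ S, (1 - w j)) ≤ fmax := by
  have hQone : ∑ S ∈ (univ.erase i).powerset,
      ((∏ j ∈ S, w j) * ∏ j ∈ (univ.erase i) \ S, (1 - w j)) = 1 := by
    rw [← Finset.prod_add]
    rw [Finset.prod_congr rfl (fun j _ => by ring : ∀ j ∈ univ.erase i, w j + (1 - w j) = 1)]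
    exact Finset.prod_const_one
  calc ∑ S ∈ (univ.erase i).powerset, (f (insert i S) - f S) *
        ((∏ j ∈ S, w j) * ∏ j ∈ (univ.erase i) \ S, (1 - w j))
      ≤ ∑ S ∈ (univ.erase i).powerset, fmax *
        ((∏ j ∈ S, w j) * ∏ j ∈ (univ.erase i) \ S, (1 - w j)) := by
        apply Finset.sum_le_sum
        intro S hS
        rw [Finset.mem_powerset] at hS
        have hiS : i ∉ S := fun h => (notMem_erase i univ) (hS h)
        have hQ : 0 ≤ (∏ j ∈ S, w j) * ∏ j ∈ (univ.erase i) \ S, (1 - w j) := by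
          apply mul_nonneg
          · exact Finset.prod_nonneg fun j _ => (hw j).1
          · exact Finset.prod_nonneg fun j _ => by linarith [(hw j).2]
        apply mul_le_mul_of_nonneg_right _ hQ
        have h1 := hsub S {i}
        have h2 : S ∪ {i} = insert i S := by rw [Finset.union_comm, ← Finset.insert_eq]
        have h3 : S ∩ {i} = ∅ := Finset.inter_singleton_of_notMem hiS
        rw [h2, h3] at h1
        have := hnonneg (∅ : Finset (Fin n))
        have := hfmax i
        linarith
    _ = fmax := by rw [← Finset.mul_sum, hQone, mul_one]

/-- For a nonnegative submodular `f` on `{1,…,n}` (`n ≥ 1`) with multilinear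
extension `F` and `f_max = max_i f({i})`: if `z ≤ x` are points of `[0,1]ⁿ`
with `x_i − z_i ≤ δ` for all `i` (`δ ≥ 0`), then `F(x) − F(z) ≤ n·δ·f_max`. -/
theorem stmt_13 {n : ℕ} (hn : 1 ≤ n) (f : Finset (Fin n) → ℝ)
    (hsub : ∀ A B : Finset (Fin n), f A + f B ≥ f (A ∪ B) + f (A ∩ B))
    (hnonneg : ∀ A : Finset (Fin n), 0 ≤ f A)
    (fmax : ℝ)
    (hfmax : IsGreatest (Set.range fun i : Fin n => f {i}) fmax)
    (x z : Fin n → ℝ) (δ : ℝ) (hδ : 0 ≤ δ)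
    (hx : ∀ i, x i ∈ Set.Icc (0 : ℝ) 1) (hz : ∀ i, z i ∈ Set.Icc (0 : ℝ) 1)
    (hzx : ∀ i, z i ≤ x i) (hdiff : ∀ i, x i - z i ≤ δ) :
    multilinearExt f x - multilinearExt f z ≤ n * δ * fmax := by
  obtain ⟨⟨i0, hi0⟩, hub⟩ := hfmax
  have hfmax0 : 0 ≤ fmax := by
    have := hnonneg {i0}
    simp only at hi0
    linarith [hi0 ▸ this]
  have hub' : ∀ i : Fin n, f {i} ≤ fmax := fun i => hub ⟨i, rfl⟩
  set y : ℕ → Fin n → ℝ := fun k j => if (j:ℕ) < k then x j else z j with hy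
  have hy0 : y 0 = z := by funext j; simp [hy]
  have hyn : y n = x := by funext j; simp [hy, j.isLt]
  have gen : ∀ (i : Fin n) (w : Fin n → ℝ), (∀ j, w j ∈ Set.Icc (0:ℝ) 1) →
      ∀ a b : ℝ, b ≤ a → a - b ≤ δ →
      multilinearExt f (Function.update w i a) - multilinearExt f (Function.update w i b)
        ≤ δ * fmax := by
    intro i w hw a b hba hab
    rw [mle_update_sub]
    set D := ∑ S ∈ (univ.erase i).powerset, (f (insert i S) - f S) *
        ((∏ j ∈ S, w j) * ∏ j ∈ (univ.erase i) \ S, (1 - w j)) with hD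
    have hDle : D ≤ fmax := slope_le f hsub hnonneg fmax hub' w hw i
    rcases le_or_gt 0 D with h0 | h0
    · calc (a - b) * D ≤ δ * D := by apply mul_le_mul_of_nonneg_right hab h0
        _ ≤ δ * fmax := by apply mul_le_mul_of_nonneg_left hDle hδ
    · have : (a - b) * D ≤ 0 := mul_nonpos_of_nonneg_of_nonpos (by linarith) (le_of_lt h0)
      have : 0 ≤ δ * fmax := mul_nonneg hδ hfmax0
      linarith
  have key : ∀ k ∈ Finset.range n,
      multilinearExt f (y (k+1)) - multilinearExt f (y k) ≤ δ * fmax := by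
    intro k hk
    rw [Finset.mem_range] at hk
    set i : Fin n := ⟨k, hk⟩ with hi
    have h1 : y (k+1) = Function.update (y k) i (x i) := by
      funext j
      rcases eq_or_ne j i with rfl | hj
      · rw [Function.update_self]
        simp only [hy]
        rw [if_pos (by simp [hi])]
      · rw [Function.update_of_ne hj]
        have hne : (j:ℕ) ≠ k := fun h => hj (Fin.ext (by simp [hi, h]))
        simp only [hy]
        by_cases hlt : (j:ℕ) < k
        · rw [if_pos (Nat.lt_succ_of_lt hlt), if_pos hlt]
        · rw [if_neg hlt, if_neg (by omega)]
    have h2 : y k = Function.update (y k) i (z i) := by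
      funext j
      rcases eq_or_ne j i with rfl | hj
      · rw [Function.update_self]
        simp only [hy]
        rw [if_neg (by simp [hi])]
      · rw [Function.update_of_ne hj]
    have hwIcc : ∀ j, y k j ∈ Set.Icc (0:ℝ) 1 := by
      intro j; simp only [hy]
      split
      · exact hx j
      · exact hz j
    have heq : multilinearExt f (y (k+1)) - multilinearExt f (y k)
        = multilinearExt f (Function.update (y k) i (x i))
          - multilinearExt f (Function.update (y k) i (z i)) := by
      rw [← h1, ← h2]
    rw [heq]
    exact gen i (y k) hwIcc (x i) (z i) (hzx i) (hdiff i)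
  calc multilinearExt f x - multilinearExt f z
      = multilinearExt f (y n) - multilinearExt f (y 0) := by rw [hy0, hyn]
    _ = ∑ k ∈ Finset.range n,
        (multilinearExt f (y (k+1)) - multilinearExt f (y k)) :=
        (Finset.sum_range_sub (fun k => multilinearExt f (y k)) n).symm
    _ ≤ ∑ _k ∈ Finset.range n, δ * fmax := Finset.sum_le_sum key
    _ = n * δ * fmax := by
        rw [Finset.sum_const, Finset.card_range, nsmul_eq_mul]; ring
end

section
/- Let f be a nonnegative submodular function on the ground set {1,…,n} (n ≥ 1) with multilinear extension F, and let f_max = max_{1 ≤ i ≤ n} f({i}). Let δ = 1/(8n⁴), let ζ = {p·δ : p an integer, 0 ≤ p ≤ 8n⁴}, let u ∈ [0,1]^n, and let 𝒰 = {y ∈ ℝ^n : 0 ≤ y_i ≤ u_i for all i}. Suppose y ∈ [0,1]^n satisfies F(y) ≥ 0.4·F(z) for every z ∈ 𝒰 ∩ ζ^n. Then for every x ∈ 𝒰, 2.5·F(y) ≥ F(x) − f_max/(4n²). -/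
open Finset

noncomputable def Qw {n : ℕ} (a : Fin n → ℝ) (i : Fin n) (S : Finset (Fin n)) : ℝ :=
  (∏ j ∈ S, a j) * ∏ j ∈ (insert i S)ᶜ, (1 - a j)

lemma Qw_nonneg {n : ℕ} {a : Fin n → ℝ} (ha : ∀ j, 0 ≤ a j ∧ a j ≤ 1)
    (i : Fin n) (S : Finset (Fin n)) : 0 ≤ Qw a i S :=
  mul_nonneg (Finset.prod_nonneg fun j _ => (ha j).1)
    (Finset.prod_nonneg fun j _ => by linarith [(ha j).2])

lemma Qw_sum {n : ℕ} (a : Fin n → ℝ) (i : Fin n) :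
    ∑ S ∈ univ.filter (fun S : Finset (Fin n) => i ∉ S), Qw a i S = 1 := by
  have h1 : univ.filter (fun S : Finset (Fin n) => i ∉ S) = (univ.erase i).powerset := by
    ext S
    simp [Finset.subset_erase]
  rw [h1]
  have h2 : ∀ S ∈ (univ.erase i).powerset, Qw a i S
      = (∏ j ∈ S, a j) * ∏ j ∈ (univ.erase i) \ S, (1 - a j) := by
    intro S hS
    rw [Finset.mem_powerset] at hS
    have : (insert i S)ᶜ = (univ.erase i) \ S := by
      ext j
      simp only [Finset.mem_compl, Finset.mem_insert, Finset.mem_sdiff, Finset.mem_erase,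
        Finset.mem_univ, true_and, and_true]
      tauto
    rw [Qw, this]
  rw [Finset.sum_congr rfl h2, ← Finset.prod_add]
  simp

lemma ml_decomp {n : ℕ} (f : Finset (Fin n) → ℝ) (a : Fin n → ℝ) (i : Fin n) (c : ℝ) :
    multilinearExt f (Function.update a i c)
      = ∑ S ∈ univ.filter (fun S : Finset (Fin n) => i ∉ S),
          ((1 - c) * f S + c * f (insert i S)) * Qw a i S := by
  rw [multilinearExt, ← Finset.sum_filter_add_sum_filter_not univ (fun S : Finset (Fin n) => i ∈ S)]
  have h1 : ∑ S ∈ univ.filter (fun S : Finset (Fin n) => i ∈ S),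
      f S * ((∏ j ∈ S, Function.update a i c j) * ∏ j ∈ Sᶜ, (1 - Function.update a i c j))
      = ∑ T ∈ univ.filter (fun T : Finset (Fin n) => i ∉ T),
          (c * f (insert i T)) * Qw a i T := by
    refine Finset.sum_nbij' (fun S => S.erase i) (fun T => insert i T) ?_ ?_ ?_ ?_ ?_
    · intro S hS; simp
    · intro T hT; simp
    · intro S hS; simp only [Finset.mem_filter, Finset.mem_univ, true_and] at hS
      exact Finset.insert_erase hS
    · intro T hT; simp only [Finset.mem_filter, Finset.mem_univ, true_and] at hT
      exact Finset.erase_insert hT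
    · intro S hS
      simp only [Finset.mem_filter, Finset.mem_univ, true_and] at hS
      have hp1 : ∏ j ∈ S, Function.update a i c j = c * ∏ j ∈ S.erase i, a j := by
        rw [Finset.prod_update_of_mem hS, Finset.erase_eq]
      have hp2 : ∏ j ∈ Sᶜ, (1 - Function.update a i c j) = ∏ j ∈ Sᶜ, (1 - a j) := by
        refine Finset.prod_congr rfl fun j hj => ?_
        rw [Function.update_of_ne]
        intro h; rw [h] at hj; exact (Finset.mem_compl.mp hj) hS
      rw [hp1, hp2, Qw, Finset.insert_erase hS]
      ring
  have h2 : ∑ S ∈ univ.filter (fun S : Finset (Fin n) => ¬ i ∈ S),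
      f S * ((∏ j ∈ S, Function.update a i c j) * ∏ j ∈ Sᶜ, (1 - Function.update a i c j))
      = ∑ S ∈ univ.filter (fun S : Finset (Fin n) => i ∉ S),
          ((1 - c) * f S) * Qw a i S := by
    refine Finset.sum_congr rfl fun S hS => ?_
    simp only [Finset.mem_filter, Finset.mem_univ, true_and] at hS
    have hp1 : ∏ j ∈ S, Function.update a i c j = ∏ j ∈ S, a j :=
      Finset.prod_update_of_notMem hS a c
    have hfun : (fun j => 1 - Function.update a i c j)
        = Function.update (fun j => 1 - a j) i (1 - c) := by
      funext j
      by_cases h : j = i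
      · subst h; simp
      · simp [Function.update_of_ne h]
    have hic : i ∈ Sᶜ := Finset.mem_compl.mpr hS
    have hp2 : ∏ j ∈ Sᶜ, (1 - Function.update a i c j)
        = (1 - c) * ∏ j ∈ Sᶜ \ {i}, (1 - a j) := by
      rw [hfun]
      exact Finset.prod_update_of_mem hic _ _
    have hset : Sᶜ \ {i} = (insert i S)ᶜ := by
      ext j
      simp only [Finset.mem_sdiff, Finset.mem_compl, Finset.mem_singleton, Finset.mem_insert]
      tauto
    rw [hp1, hp2, hset, Qw]
    ring
  rw [h1, h2, ← Finset.sum_add_distrib]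
  refine Finset.sum_congr rfl fun S hS => by ring

/-- single-coordinate Lipschitz step -/
lemma ml_step {n : ℕ} (f : Finset (Fin n) → ℝ)
    (hsub : ∀ A B : Finset (Fin n), f A + f B ≥ f (A ∪ B) + f (A ∩ B))
    (hnonneg : ∀ A : Finset (Fin n), 0 ≤ f A)
    (fmax : ℝ) (hfmax : IsGreatest (Set.range fun i : Fin n => f {i}) fmax)
    (a : Fin n → ℝ) (ha : ∀ j, 0 ≤ a j ∧ a j ≤ 1)
    (i : Fin n) (s t : ℝ) (hst : s ≤ t) :
    multilinearExt f (Function.update a i t)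
      ≤ multilinearExt f (Function.update a i s) + (t - s) * fmax := by
  have key : multilinearExt f (Function.update a i t)
      - multilinearExt f (Function.update a i s)
      = ∑ S ∈ univ.filter (fun S : Finset (Fin n) => i ∉ S),
          (t - s) * ((f (insert i S) - f S) * Qw a i S) := by
    rw [ml_decomp, ml_decomp, ← Finset.sum_sub_distrib]
    exact Finset.sum_congr rfl fun S _ => by ring
  have hb : ∑ S ∈ univ.filter (fun S : Finset (Fin n) => i ∉ S),
        (t - s) * ((f (insert i S) - f S) * Qw a i S)
      ≤ ∑ S ∈ univ.filter (fun S : Finset (Fin n) => i ∉ S),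
        (t - s) * (fmax * Qw a i S) := by
    refine Finset.sum_le_sum fun S hS => ?_
    have hm : f (insert i S) - f S ≤ fmax := by
      have h1 := hsub {i} S
      have h2 : ({i} : Finset (Fin n)) ∪ S = insert i S := by
        ext j; simp [or_comm]
      have h3 : f {i} ≤ fmax := hfmax.2 ⟨i, rfl⟩
      have h4 : 0 ≤ f ({i} ∩ S) := hnonneg _
      rw [h2] at h1
      linarith
    have hq := Qw_nonneg ha i S
    have := mul_le_mul_of_nonneg_right hm hq
    nlinarith
  have hsum : ∑ S ∈ univ.filter (fun S : Finset (Fin n) => i ∉ S),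
      (t - s) * (fmax * Qw a i S) = (t - s) * fmax := by
    rw [← Finset.mul_sum]
    have : ∑ S ∈ univ.filter (fun S : Finset (Fin n) => i ∉ S), fmax * Qw a i S
        = fmax * ∑ S ∈ univ.filter (fun S : Finset (Fin n) => i ∉ S), Qw a i S := by
      rw [Finset.mul_sum]
    rw [this, Qw_sum, mul_one]
  linarith [key, hb, hsum.symm]

/-- Lipschitz bound via telescoping -/
lemma ml_lipschitz {n : ℕ} (f : Finset (Fin n) → ℝ)
    (hsub : ∀ A B : Finset (Fin n), f A + f B ≥ f (A ∪ B) + f (A ∩ B))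
    (hnonneg : ∀ A : Finset (Fin n), 0 ≤ f A)
    (fmax : ℝ) (hfmax : IsGreatest (Set.range fun i : Fin n => f {i}) fmax)
    (x z : Fin n → ℝ) (hz0 : ∀ i, 0 ≤ z i) (hzx : ∀ i, z i ≤ x i) (hx1 : ∀ i, x i ≤ 1)
    (δ' : ℝ) (hδ' : 0 ≤ δ') (hd : ∀ i, x i - z i ≤ δ') :
    multilinearExt f x ≤ multilinearExt f z + n * δ' * fmax := by
  obtain ⟨i0, hi0⟩ := hfmax.1
  have hfmax0 : 0 ≤ fmax := hi0 ▸ hnonneg _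
  set w : ℕ → (Fin n → ℝ) := fun k j => if (j : ℕ) < k then z j else x j with hw
  have hw0 : w 0 = x := by funext j; simp [hw]
  have hwn : w n = z := by funext j; simp [hw, j.isLt]
  have hwmem : ∀ k j, 0 ≤ w k j ∧ w k j ≤ 1 := by
    intro k j
    by_cases h : (j : ℕ) < k <;> simp [hw, h] <;>
      constructor
    · exact hz0 j
    · exact le_trans (hzx j) (hx1 j)
    · exact le_trans (hz0 j) (hzx j)
    · exact hx1 j
  have step : ∀ k (hk : k < n),
      multilinearExt f (w k) ≤ multilinearExt f (w (k+1)) + δ' * fmax := by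
    intro k hk
    set i : Fin n := ⟨k, hk⟩ with hi
    have e1 : Function.update (w (k+1)) i (x i) = w k := by
      funext j
      by_cases h : j = i
      · subst h; simp [hw, Function.update_self, hi]
      · rw [Function.update_of_ne h]
        have hne : (j : ℕ) ≠ k := fun hc => h (Fin.ext hc)
        simp only [hw]
        by_cases h2 : (j : ℕ) < k
        · have : (j : ℕ) < k + 1 := by omega
          simp [h2, this]
        · have : ¬ (j : ℕ) < k + 1 := by omega
          simp [h2, this]
    have e2 : Function.update (w (k+1)) i (z i) = w (k+1) := by
      funext j
      by_cases h : j = i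
      · subst h; simp [hw, Function.update_self, hi]
      · rw [Function.update_of_ne h]
    have := ml_step f hsub hnonneg fmax hfmax (w (k+1)) (hwmem (k+1)) i (z i) (x i) (hzx i)
    rw [e1, e2] at this
    have hle : (x i - z i) * fmax ≤ δ' * fmax :=
      mul_le_mul_of_nonneg_right (hd i) hfmax0
    linarith
  have main : ∀ k, k ≤ n → multilinearExt f x ≤ multilinearExt f (w k) + k * δ' * fmax := by
    intro k
    induction k with
    | zero => intro _; rw [hw0]; simp
    | succ m ih =>
      intro hm
      have h1 := ih (Nat.le_of_succ_le hm)
      have h2 := step m hm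
      push_cast
      nlinarith
  have := main n le_rfl
  rw [hwn] at this
  exact this
/-- guarantee of the extended smooth local search `FMV_Y`.
With `δ = 1/(8n⁴)`, `ζ = {p·δ : p ∈ ℕ, p ≤ 8n⁴}`, an upper-bound vector
`u ∈ [0,1]ⁿ` and `𝒰 = {y : 0 ≤ y ≤ u}`: if `y ∈ [0,1]ⁿ` satisfies
`F(y) ≥ 0.4·F(z)` for every `z ∈ 𝒰 ∩ ζⁿ`, then for every `x ∈ 𝒰`,
`2.5·F(y) ≥ F(x) − f_max/(4n²)`. -/
theorem stmt_14 {n : ℕ} (hn : 1 ≤ n) (f : Finset (Fin n) → ℝ)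
    (hsub : ∀ A B : Finset (Fin n), f A + f B ≥ f (A ∪ B) + f (A ∩ B))
    (hnonneg : ∀ A : Finset (Fin n), 0 ≤ f A)
    (fmax : ℝ)
    (hfmax : IsGreatest (Set.range fun i : Fin n => f {i}) fmax)
    (δ : ℝ) (hδ : δ = 1 / (8 * (n : ℝ) ^ 4))
    (ζ : Set ℝ) (hζ : ζ = {r : ℝ | ∃ p : ℕ, p ≤ 8 * n ^ 4 ∧ r = p * δ})
    (u : Fin n → ℝ) (hu : ∀ i, u i ∈ Set.Icc (0 : ℝ) 1)
    (y : Fin n → ℝ) (hy : ∀ i, y i ∈ Set.Icc (0 : ℝ) 1)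
    (hyLS : ∀ z : Fin n → ℝ, (∀ i, 0 ≤ z i ∧ z i ≤ u i) → (∀ i, z i ∈ ζ) →
      multilinearExt f y ≥ 0.4 * multilinearExt f z) :
    ∀ x : Fin n → ℝ, (∀ i, 0 ≤ x i ∧ x i ≤ u i) →
      2.5 * multilinearExt f y ≥
        multilinearExt f x - fmax / (4 * (n : ℝ) ^ 2) := by
  intro x hx
  have hn1 : (1 : ℝ) ≤ (n : ℝ) := by exact_mod_cast hn
  have hδpos : 0 < δ := by rw [hδ]; positivity
  set z : Fin n → ℝ := fun i => (⌊x i / δ⌋₊ : ℝ) * δ with hzdef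
  have hx01 : ∀ i, 0 ≤ x i ∧ x i ≤ 1 :=
    fun i => ⟨(hx i).1, le_trans (hx i).2 (hu i).2⟩
  have hz0 : ∀ i, 0 ≤ z i := fun i => by positivity
  have hzx : ∀ i, z i ≤ x i := by
    intro i
    have := Nat.floor_le (div_nonneg (hx01 i).1 hδpos.le)
    calc (⌊x i / δ⌋₊ : ℝ) * δ ≤ (x i / δ) * δ :=
          mul_le_mul_of_nonneg_right this hδpos.le
      _ = x i := by field_simp
  have hd : ∀ i, x i - z i ≤ δ := by
    intro i
    have h1 : x i / δ < ⌊x i / δ⌋₊ + 1 := Nat.lt_floor_add_one _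
    have h2 : x i < ((⌊x i / δ⌋₊ : ℝ) + 1) * δ := by
      have := mul_lt_mul_of_pos_right h1 hδpos
      rwa [div_mul_cancel₀ _ hδpos.ne'] at this
    simp only [hzdef]
    nlinarith
  have hzζ : ∀ i, z i ∈ ζ := by
    intro i
    rw [hζ]
    refine ⟨⌊x i / δ⌋₊, ?_, rfl⟩
    have hxd : x i / δ ≤ ((8 * n ^ 4 : ℕ) : ℝ) := by
      push_cast
      rw [hδ]
      rw [div_le_iff₀ (by positivity)]
      calc x i ≤ 1 := (hx01 i).2
        _ = 8 * (n:ℝ)^4 * (1 / (8 * (n:ℝ)^4)) := by field_simp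
    calc ⌊x i / δ⌋₊ ≤ ⌊((8 * n ^ 4 : ℕ) : ℝ)⌋₊ := Nat.floor_le_floor hxd
      _ = 8 * n ^ 4 := Nat.floor_natCast _
  have hzu : ∀ i, 0 ≤ z i ∧ z i ≤ u i :=
    fun i => ⟨hz0 i, le_trans (hzx i) (hx i).2⟩
  have hls := hyLS z hzu hzζ
  have hlip := ml_lipschitz f hsub hnonneg fmax hfmax x z hz0 hzx
    (fun i => (hx01 i).2) δ hδpos.le hd
  obtain ⟨i0, hi0⟩ := hfmax.1
  have hfmax0 : 0 ≤ fmax := hi0 ▸ hnonneg _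
  have hbnd : (n : ℝ) * δ * fmax ≤ fmax / (4 * (n : ℝ) ^ 2) := by
    rw [hδ, div_eq_mul_inv fmax]
    rw [mul_comm fmax]
    refine mul_le_mul_of_nonneg_right ?_ hfmax0
    rw [mul_one_div, inv_eq_one_div, div_le_div_iff₀ (by positivity) (by positivity)]
    have h34 : (n:ℝ)^3 ≤ (n:ℝ)^4 := pow_le_pow_right₀ hn1 (by norm_num)
    nlinarith [pow_nonneg (le_trans zero_le_one hn1) 3]
  linarith
end

section
/- Let f be a nonnegative submodular function on the ground set {1,…,n} (n ≥ 1) with multilinear extension F, and let f_max = max_{1 ≤ i ≤ n} f({i}). Let x*, y₁, y₂, y₁', y₂', y_m ∈ [0,1]^n and set x' = x* − (x* ∧ y₁). Suppose: (i) F(y₁) ≥ (1 − e^{−1})·(F(x* ∨ y₁) − F(y₁')); (ii) F(y₂) ≥ (1 − e^{−1})·(F(x' ∨ y₂) − F(y₂')); (iii) 2.5·F(y_m) ≥ F(x* ∧ y₁) − f_max/(4n²); (iv) F(x* ∨ y₁) + F(x' ∨ y₂) + F(x* ∧ y₁) ≥ F(x*). Then max{F(y₁), F(y₂), F(y_m),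 F(y₁'), F(y₂')} ≥ ((2e − 2)/(13e − 9)) · (F(x*) − f_max/(4n²)). -/
open Finset

lemma multilinearExt_nonneg {n : ℕ} (f : Finset (Fin n) → ℝ)
    (hnonneg : ∀ A : Finset (Fin n), 0 ≤ f A) (x : Fin n → ℝ)
    (hx : ∀ i, x i ∈ Set.Icc (0 : ℝ) 1) : 0 ≤ multilinearExt f x := by
  apply Finset.sum_nonneg
  intro S _
  apply mul_nonneg (hnonneg S)
  apply mul_nonneg
  · exact Finset.prod_nonneg fun i _ => (hx i).1
  · exact Finset.prod_nonneg fun i _ => by linarith [(hx i).2]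

/-- guarantee of the continuous-greedy-based algorithm for a
solvable packing polytope, stated conditionally on the subroutine guarantees.
Given points `x*, y₁, y₂, y₁', y₂', y_m ∈ [0,1]ⁿ` with `x' = x* − (x* ∧ y₁)`
satisfying (i)–(iv), the best of the five candidate values is at least
`((2e − 2)/(13e − 9))·(F(x*) − f_max/(4n²))`. -/
theorem stmt_15 {n : ℕ} (hn : 1 ≤ n) (f : Finset (Fin n) → ℝ)
    (hsub : ∀ A B : Finset (Fin n), f A + f B ≥ f (A ∪ B) + f (A ∩ B))
    (hnonneg : ∀ A : Finset (Fin n), 0 ≤ f A)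
    (fmax : ℝ)
    (hfmax : IsGreatest (Set.range fun i : Fin n => f {i}) fmax)
    (xs y₁ y₂ y₁' y₂' ym x' : Fin n → ℝ)
    (hxs : ∀ i, xs i ∈ Set.Icc (0 : ℝ) 1)
    (hy₁ : ∀ i, y₁ i ∈ Set.Icc (0 : ℝ) 1)
    (hy₂ : ∀ i, y₂ i ∈ Set.Icc (0 : ℝ) 1)
    (hy₁' : ∀ i, y₁' i ∈ Set.Icc (0 : ℝ) 1)
    (hy₂' : ∀ i, y₂' i ∈ Set.Icc (0 : ℝ) 1)
    (hym : ∀ i, ym i ∈ Set.Icc (0 : ℝ) 1)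
    (hx' : ∀ i, x' i = xs i - min (xs i) (y₁ i))
    (h1 : multilinearExt f y₁ ≥ (1 - Real.exp (-1)) *
      (multilinearExt f (fun i => max (xs i) (y₁ i)) - multilinearExt f y₁'))
    (h2 : multilinearExt f y₂ ≥ (1 - Real.exp (-1)) *
      (multilinearExt f (fun i => max (x' i) (y₂ i)) - multilinearExt f y₂'))
    (h3 : 2.5 * multilinearExt f ym ≥
      multilinearExt f (fun i => min (xs i) (y₁ i)) - fmax / (4 * (n : ℝ) ^ 2))
    (h4 : multilinearExt f (fun i => max (xs i) (y₁ i)) +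
        multilinearExt f (fun i => max (x' i) (y₂ i)) +
        multilinearExt f (fun i => min (xs i) (y₁ i)) ≥
      multilinearExt f xs) :
    max (multilinearExt f y₁) (max (multilinearExt f y₂)
        (max (multilinearExt f ym)
          (max (multilinearExt f y₁') (multilinearExt f y₂')))) ≥
      ((2 * Real.exp 1 - 2) / (13 * Real.exp 1 - 9)) *
        (multilinearExt f xs - fmax / (4 * (n : ℝ) ^ 2)) := by
  have he : (1 : ℝ) < Real.exp 1 := by
    have := Real.add_one_le_exp (1 : ℝ); linarith
  set e := Real.exp 1 with he_def
  have hexp : Real.exp (-1) = e⁻¹ := Real.exp_neg 1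
  set a := multilinearExt f y₁ with ha_def
  set b := multilinearExt f y₂ with hb_def
  set m := multilinearExt f ym with hm_def
  set p := multilinearExt f y₁' with hp_def
  set q := multilinearExt f y₂' with hq_def
  set A := multilinearExt f (fun i => max (xs i) (y₁ i)) with hA_def
  set B := multilinearExt f (fun i => max (x' i) (y₂ i)) with hB_def
  set C := multilinearExt f (fun i => min (xs i) (y₁ i)) with hC_def
  set X := multilinearExt f xs with hX_def
  set d := fmax / (4 * (n : ℝ) ^ 2) with hd_def
  set M := max a (max b (max m (max p q))) with hM_def
  have he0 : (0 : ℝ) < e := by linarith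
  have hMa : a ≤ M := le_max_left _ _
  have hMb : b ≤ M := le_trans (le_max_left _ _) (le_max_right _ _)
  have hMm : m ≤ M :=
    le_trans (le_trans (le_max_left _ _) (le_max_right _ _)) (le_max_right _ _)
  have hMp : p ≤ M :=
    le_trans (le_trans (le_trans (le_max_left _ _) (le_max_right _ _))
      (le_max_right _ _)) (le_max_right _ _)
  have hMq : q ≤ M :=
    le_trans (le_trans (le_trans (le_max_right _ _) (le_max_right _ _))
      (le_max_right _ _)) (le_max_right _ _)
  have h1' : e * ((1 - e⁻¹) * (A - p)) ≤ e * a := by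
    rw [hexp] at h1; exact mul_le_mul_of_nonneg_left h1 (le_of_lt he0)
  have h2' : e * ((1 - e⁻¹) * (B - q)) ≤ e * b := by
    rw [hexp] at h2; exact mul_le_mul_of_nonneg_left h2 (le_of_lt he0)
  have hene : e ≠ 0 := ne_of_gt he0
  have hsimp1 : e * ((1 - e⁻¹) * (A - p)) = (e - 1) * (A - p) := by
    field_simp
  have hsimp2 : e * ((1 - e⁻¹) * (B - q)) = (e - 1) * (B - q) := by
    field_simp
  rw [hsimp1] at h1'
  rw [hsimp2] at h2'
  have heM : e * a ≤ e * M := mul_le_mul_of_nonneg_left hMa (le_of_lt he0)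
  have heMb : e * b ≤ e * M := mul_le_mul_of_nonneg_left hMb (le_of_lt he0)
  have hem1 : (e - 1) * p ≤ (e - 1) * M :=
    mul_le_mul_of_nonneg_left hMp (by linarith)
  have hem2 : (e - 1) * q ≤ (e - 1) * M :=
    mul_le_mul_of_nonneg_left hMq (by linarith)
  have hem3 : (e - 1) * m ≤ (e - 1) * M :=
    mul_le_mul_of_nonneg_left hMm (by linarith)
  have hCle : (e - 1) * C ≤ (e - 1) * (2.5 * m + d) :=
    mul_le_mul_of_nonneg_left (by linarith) (by linarith)
  have hXle : (e - 1) * X ≤ (e - 1) * (A + B + C) :=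
    mul_le_mul_of_nonneg_left h4 (by linarith)
  have key : (2 * e - 2) * (X - d) ≤ (13 * e - 9) * M := by nlinarith
  rw [ge_iff_le, div_mul_eq_mul_div, div_le_iff₀ (by linarith : (0:ℝ) < 13 * e - 9)]
  linarith
end
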